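/- arXiv:0801.3552 — 9 statements merged into one kernel-verified Lean document; each statement's English description precedes it below -/
import Mathlib

section
/- Let m and k be positive integers and let y_1, ..., y_m ∈ (0,1). Then the equation log(∏_{j=1}^m y_j) + ∑_{i=1}^k m/(c - i + 1) = 0 has a unique root c in the interval (k-1, ∞): the function c ↦ ∑_{j=1}^m log y_j + ∑_{i=1}^k m/(c - i + 1) is strictly decreasing on (k-1, ∞), tends to +∞ as c → (k-1)^+, tends to ∑_{j=1}^m log y_j < 0 as c → ∞, and therefore has exactly one zero on this interval. -/
open Filter

/-- The score equation for the `k`-th order statistic sketch: on `(k-1, ∞)` the function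
`c ↦ ∑ j, log (y j) + ∑_{i=1}^k m / (c - i + 1)` is strictly decreasing, tends to `+∞` as
`c → (k-1)⁺`, tends to `∑ j, log (y j) < 0` as `c → ∞`, and has a unique zero. -/
theorem score_equation_unique_root (m k : ℕ) (hm : 0 < m) (hk : 0 < k)
    (y : Fin m → ℝ) (hy : ∀ j, y j ∈ Set.Ioo (0 : ℝ) 1) :
    StrictAntiOn
      (fun c : ℝ => (∑ j, Real.log (y j)) + ∑ i ∈ Finset.Icc 1 k, (m : ℝ) / (c - (i : ℝ) + 1))
      (Set.Ioi ((k : ℝ) - 1)) ∧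
    Tendsto
      (fun c : ℝ => (∑ j, Real.log (y j)) + ∑ i ∈ Finset.Icc 1 k, (m : ℝ) / (c - (i : ℝ) + 1))
      (nhdsWithin ((k : ℝ) - 1) (Set.Ioi ((k : ℝ) - 1))) atTop ∧
    Tendsto
      (fun c : ℝ => (∑ j, Real.log (y j)) + ∑ i ∈ Finset.Icc 1 k, (m : ℝ) / (c - (i : ℝ) + 1))
      atTop (nhds (∑ j, Real.log (y j))) ∧
    (∑ j, Real.log (y j)) < 0 ∧
    (∃! c : ℝ, c ∈ Set.Ioi ((k : ℝ) - 1) ∧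
      (∑ j, Real.log (y j)) + ∑ i ∈ Finset.Icc 1 k, (m : ℝ) / (c - (i : ℝ) + 1) = 0) := by
  have hm' : (0 : ℝ) < m := by exact_mod_cast hm
  set S : ℝ := ∑ j, Real.log (y j) with hS
  set f : ℝ → ℝ := fun c : ℝ => S + ∑ i ∈ Finset.Icc 1 k, (m : ℝ) / (c - (i : ℝ) + 1) with hf
  -- denominators positive
  have hden : ∀ c ∈ Set.Ioi ((k : ℝ) - 1), ∀ i ∈ Finset.Icc 1 k, 0 < c - (i : ℝ) + 1 := by
    intro c hc i hi
    have hik : (i : ℝ) ≤ k := by exact_mod_cast (Finset.mem_Icc.1 hi).2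
    have : (k : ℝ) - 1 < c := hc
    linarith
  have hSneg : S < 0 := by
    haveI : Nonempty (Fin m) := ⟨⟨0, hm⟩⟩
    apply Finset.sum_neg (fun j _ => Real.log_neg (hy j).1 (hy j).2) Finset.univ_nonempty
  -- strict antitonicity
  have hanti : StrictAntiOn f (Set.Ioi ((k : ℝ) - 1)) := by
    intro a ha b hb hab
    have hsum : ∑ i ∈ Finset.Icc 1 k, (m : ℝ) / (b - (i : ℝ) + 1)
        < ∑ i ∈ Finset.Icc 1 k, (m : ℝ) / (a - (i : ℝ) + 1) := by
      apply Finset.sum_lt_sum_of_nonempty (Finset.nonempty_Icc.2 hk)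
      intro i hi
      exact div_lt_div_of_pos_left hm' (hden a ha i hi) (by linarith)
    simpa [hf] using add_lt_add_left hsum S
  -- limit at (k-1)⁺
  have hlim1 : Tendsto f (nhdsWithin ((k : ℝ) - 1) (Set.Ioi ((k : ℝ) - 1))) atTop := by
    have h1 : Tendsto (fun c : ℝ => c - (k : ℝ) + 1) (nhdsWithin ((k : ℝ) - 1) (Set.Ioi ((k : ℝ) - 1)))
        (nhdsWithin 0 (Set.Ioi 0)) := by
      apply tendsto_nhdsWithin_of_tendsto_nhds_of_eventually_within
      · have : Tendsto (fun c : ℝ => c - (k : ℝ) + 1) (nhds ((k : ℝ) - 1))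
            (nhds (((k : ℝ) - 1) - (k : ℝ) + 1)) :=
          ((continuous_id.sub continuous_const).add continuous_const).tendsto _
        simpa using this.mono_left nhdsWithin_le_nhds
      · filter_upwards [self_mem_nhdsWithin] with c hc
        simp only [Set.mem_Ioi] at *
        linarith
    have h2 : Tendsto (fun c : ℝ => (m : ℝ) / (c - (k : ℝ) + 1))
        (nhdsWithin ((k : ℝ) - 1) (Set.Ioi ((k : ℝ) - 1))) atTop := by
      have := (tendsto_inv_nhdsGT_zero.comp h1).const_mul_atTop hm'
      simpa [div_eq_mul_inv] using this
    apply tendsto_atTop_mono' _ _ (tendsto_atTop_add_const_left _ S h2)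
    filter_upwards [self_mem_nhdsWithin] with c hc
    have hk' : k ∈ Finset.Icc 1 k := Finset.mem_Icc.2 ⟨hk, le_rfl⟩
    have : (m : ℝ) / (c - (k : ℝ) + 1) ≤ ∑ i ∈ Finset.Icc 1 k, (m : ℝ) / (c - (i : ℝ) + 1) :=
      Finset.single_le_sum (fun i hi => le_of_lt (div_pos hm' (hden c hc i hi))) hk'
    simp only [hf]
    linarith
  -- limit at +∞
  have hlim2 : Tendsto f atTop (nhds S) := by
    have hsum : Tendsto (fun c : ℝ => ∑ i ∈ Finset.Icc 1 k, (m : ℝ) / (c - (i : ℝ) + 1))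
        atTop (nhds 0) := by
      have h0 := tendsto_finset_sum (Finset.Icc 1 k)
        (fun (i : ℕ) (_ : i ∈ Finset.Icc 1 k) => by
          have hden' : Tendsto (fun c : ℝ => c - (i : ℝ) + 1) atTop atTop := by
            simp only [sub_eq_add_neg]
            exact tendsto_atTop_add_const_right _ _
              (tendsto_atTop_add_const_right _ _ tendsto_id)
          exact Tendsto.div_atTop (tendsto_const_nhds (x := (m : ℝ))) hden')
      simpa using h0
    simpa using hsum.const_add S
  refine ⟨hanti, hlim1, hlim2, hSneg, ?_⟩
  -- existence and uniqueness of the root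
  have hcont : ContinuousOn f (Set.Ioi ((k : ℝ) - 1)) := by
    apply ContinuousOn.add continuousOn_const
    apply continuousOn_finset_sum
    intro i hi
    exact ContinuousOn.div continuousOn_const (by fun_prop)
      (fun c hc => (hden c hc i hi).ne')
  -- find a with f a > 0
  obtain ⟨a, hfa, ha⟩ : ∃ a, 0 < f a ∧ a ∈ Set.Ioi ((k : ℝ) - 1) :=
    ((hlim1.eventually_gt_atTop 0).and self_mem_nhdsWithin).exists
  -- find b > a with f b < 0
  obtain ⟨b, hfb, hab⟩ : ∃ b, f b < 0 ∧ a ≤ b :=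
    ((Tendsto.eventually_lt_const hSneg hlim2).and (eventually_ge_atTop a)).exists
  have hIcc : Set.Icc a b ⊆ Set.Ioi ((k : ℝ) - 1) := fun x hx =>
    lt_of_lt_of_le ha hx.1
  have h0mem : (0 : ℝ) ∈ Set.Icc (f b) (f a) := ⟨hfb.le, hfa.le⟩
  obtain ⟨c, hc, hfc⟩ := intermediate_value_Icc' hab (hcont.mono hIcc) h0mem
  have hcIoi : c ∈ Set.Ioi ((k : ℝ) - 1) := hIcc hc
  refine ⟨c, ⟨hcIoi, hfc⟩, ?_⟩
  intro c' ⟨hc', hfc'⟩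
  exact hanti.injOn hc' hcIoi (by show f c' = f c; rw [hfc]; exact hfc')
end

section
/- Let q ∈ (0,1), let c > 0, and consider a Bernoulli random variable Y with success probability P(c) = 1 - q^c. Then the Fisher information for the parameter c from one such observation, I(c) = (P'(c))² / (P(c)(1 - P(c))), equals q^c·(log q)² / (1 - q^c). Moreover, substituting q = exp(-λ/c) for λ > 0 gives I(c) = λ² / (c²·(e^λ - 1)), so that the ratio of this Fisher information to the Fisher information 1/c² obtained from a continuous hash function equals λ²/(e^λ - 1). -/
/-- Fisher information for Bernoulli hashing: for `q ∈ (0,1)` and `c > 0`, with success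
probability `P(c) = 1 - q ^ c`, the Fisher information `(P'(c))² / (P(c)(1 - P(c)))` equals
`q ^ c * (log q)² / (1 - q ^ c)`; substituting `q = exp (-λ/c)` gives `λ² / (c² (e^λ - 1))`,
whose ratio to the continuous-hashing information `1/c²` is `λ² / (e^λ - 1)`. -/
theorem bernoulli_fisher_information (q : ℝ) (hq : q ∈ Set.Ioo (0 : ℝ) 1)
    (c : ℝ) (hc : 0 < c) :
    (deriv (fun c : ℝ => 1 - q ^ c) c) ^ 2 / ((1 - q ^ c) * (1 - (1 - q ^ c))) =
      q ^ c * (Real.log q) ^ 2 / (1 - q ^ c) ∧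
    (∀ l : ℝ, 0 < l →
      (Real.exp (-l / c)) ^ c * (Real.log (Real.exp (-l / c))) ^ 2 /
          (1 - (Real.exp (-l / c)) ^ c) =
        l ^ 2 / (c ^ 2 * (Real.exp l - 1)) ∧
      ((Real.exp (-l / c)) ^ c * (Real.log (Real.exp (-l / c))) ^ 2 /
          (1 - (Real.exp (-l / c)) ^ c)) / (1 / c ^ 2) =
        l ^ 2 / (Real.exp l - 1)) := by
  obtain ⟨hq0, hq1⟩ := hq
  have hc0 : c ≠ 0 := hc.ne'
  constructor
  · have hqc0 : (0 : ℝ) < q ^ c := Real.rpow_pos_of_pos hq0 c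
    have hqc1 : q ^ c < 1 := Real.rpow_lt_one hq0.le hq1 hc
    have hd : deriv (fun c : ℝ => 1 - q ^ c) c = -(q ^ c * Real.log q) := by
      have h1 : HasDerivAt (fun c : ℝ => q ^ c) (q ^ c * Real.log q) c :=
        (Real.hasStrictDerivAt_const_rpow hq0 c).hasDerivAt
      have h2 : HasDerivAt (fun c : ℝ => 1 - q ^ c) (-(q ^ c * Real.log q)) c := by
        exact h1.const_sub 1
      exact h2.deriv
    rw [hd]
    have h1 : 1 - (1 - q ^ c) = q ^ c := by ring
    have hne1 : 1 - q ^ c ≠ 0 := by linarith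
    rw [h1, neg_pow]
    rw [div_eq_div_iff (mul_ne_zero hne1 hqc0.ne') hne1]
    ring
  · intro l hl
    have hexp : (Real.exp (-l / c)) ^ c = Real.exp (-l) := by
      rw [Real.rpow_def_of_pos (Real.exp_pos _), Real.log_exp, div_mul_cancel₀ _ hc0]
    have hlog : Real.log (Real.exp (-l / c)) = -l / c := Real.log_exp _
    rw [hexp, hlog]
    have he1 : 1 < Real.exp l := Real.one_lt_exp_iff.mpr hl
    have hne : Real.exp l - 1 ≠ 0 := by linarith
    have h1 : 1 - Real.exp (-l) = (Real.exp l - 1) / Real.exp l := by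
      rw [Real.exp_neg]
      field_simp
    have key : Real.exp (-l) * (-l / c) ^ 2 / (1 - Real.exp (-l)) =
        l ^ 2 / (c ^ 2 * (Real.exp l - 1)) := by
      rw [h1, Real.exp_neg]
      have hep := (Real.exp_pos l).ne'
      field_simp
    refine ⟨key, ?_⟩
    rw [key]
    field_simp
end

section
/- The equation λ = 2·(1 - e^{-λ}) has a unique positive root λ_0 (numerically λ_0 ≈ 1.594, expressible as λ_0 = 2 + W(-2e^{-2}) where W is Lambert's function), and the function g(λ) = λ²/(e^λ - 1) attains its unique global maximum on (0,∞) at λ = λ_0. -/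
open Real Set

noncomputable def fB (l : ℝ) : ℝ := 2 * (1 - Real.exp (-l)) - l

lemma fB_hasDeriv (l : ℝ) : HasDerivAt fB (2 * Real.exp (-l) - 1) l := by
  have h1 : HasDerivAt (fun l : ℝ => Real.exp (-l)) (-Real.exp (-l)) l := by
    simpa [Function.comp_def] using (Real.hasDerivAt_exp (-l)).comp l ((hasDerivAt_id l).neg)
  have h2 := (((h1.const_sub 1).const_mul 2).sub (hasDerivAt_id l))
  have he : (2 * Real.exp (-l) - 1) = 2 * -(-Real.exp (-l)) - 1 := by ring
  rw [he]
  exact h2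

lemma fB_cont : Continuous fB := by unfold fB; fun_prop

lemma fB_mono : StrictMonoOn fB (Icc 0 (Real.log 2)) := by
  apply strictMonoOn_of_deriv_pos (convex_Icc _ _) fB_cont.continuousOn
  intro x hx
  rw [interior_Icc] at hx
  rw [(fB_hasDeriv x).deriv]
  have : Real.exp (-Real.log 2) < Real.exp (-x) := Real.exp_lt_exp.2 (by linarith [hx.2])
  have h2 : Real.exp (-Real.log 2) = 1/2 := by
    rw [Real.exp_neg, Real.exp_log two_pos]; norm_num
  linarith

lemma fB_anti : StrictAntiOn fB (Ici (Real.log 2)) := by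
  apply strictAntiOn_of_deriv_neg (convex_Ici _) fB_cont.continuousOn
  intro x hx
  rw [interior_Ici] at hx
  rw [(fB_hasDeriv x).deriv]
  have : Real.exp (-x) < Real.exp (-Real.log 2) := Real.exp_lt_exp.2 (by simp at hx; linarith)
  have h2 : Real.exp (-Real.log 2) = 1/2 := by
    rw [Real.exp_neg, Real.exp_log two_pos]; norm_num
  linarith

lemma fB_zero : fB 0 = 0 := by simp [fB]

lemma fB_log2 : fB (Real.log 2) = 1 - Real.log 2 := by
  rw [fB, Real.exp_neg, Real.exp_log two_pos]; ring

lemma log2_lt_one : Real.log 2 < 1 := by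
  have := Real.log_two_lt_d9; linarith

lemma log2_pos : 0 < Real.log 2 := Real.log_pos (by norm_num)

-- root > log 2
lemma root_gt_log2 {l₀ : ℝ} (h0 : 0 < l₀) (hr : fB l₀ = 0) : Real.log 2 < l₀ := by
  by_contra h
  push_neg at h
  have := fB_mono (Set.mem_Icc.2 ⟨le_refl 0, le_of_lt log2_pos⟩)
    (Set.mem_Icc.2 ⟨le_of_lt h0, h⟩) h0
  rw [fB_zero, hr] at this
  exact lt_irrefl 0 this

lemma fB_pos_of_lt {l₀ : ℝ} (h0 : 0 < l₀) (hr : fB l₀ = 0) {l : ℝ} (hl : 0 < l)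
    (hll : l < l₀) : 0 < fB l := by
  have hgt := root_gt_log2 h0 hr
  rcases le_or_gt l (Real.log 2) with h | h
  · have := fB_mono (Set.mem_Icc.2 ⟨le_refl 0, le_of_lt log2_pos⟩)
      (Set.mem_Icc.2 ⟨le_of_lt hl, h⟩) hl
    rwa [fB_zero] at this
  · have := fB_anti (Set.mem_Ici.2 (le_of_lt h)) (Set.mem_Ici.2 (le_of_lt hgt)) hll
    rwa [hr] at this

lemma fB_neg_of_gt {l₀ : ℝ} (h0 : 0 < l₀) (hr : fB l₀ = 0) {l : ℝ}
    (hll : l₀ < l) : fB l < 0 := by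
  have hgt := root_gt_log2 h0 hr
  have := fB_anti (Set.mem_Ici.2 (le_of_lt hgt)) (Set.mem_Ici.2 (le_of_lt (hgt.trans hll))) hll
  rwa [hr] at this

-- existence of root
lemma root_exists : ∃ l₀ : ℝ, 0 < l₀ ∧ fB l₀ = 0 := by
  have h1 : fB (Real.log 2) > 0 := by rw [fB_log2]; linarith [log2_lt_one]
  have h2 : fB 2 < 0 := by
    have : 0 < Real.exp (-2) := Real.exp_pos _
    simp only [fB]; nlinarith
  have hle : Real.log 2 ≤ 2 := by linarith [log2_lt_one]
  have := intermediate_value_Icc' hle fB_cont.continuousOn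
    (Set.mem_Icc.2 ⟨le_of_lt h2, le_of_lt h1⟩ : (0:ℝ) ∈ Icc (fB 2) (fB (Real.log 2)))
  obtain ⟨l₀, hmem, hz⟩ := this
  exact ⟨l₀, lt_of_lt_of_le log2_pos hmem.1, hz⟩

noncomputable def gB (l : ℝ) : ℝ := l ^ 2 / (Real.exp l - 1)

lemma gB_hasDeriv {x : ℝ} (hx : 0 < x) :
    HasDerivAt gB (x * Real.exp x * fB x / (Real.exp x - 1) ^ 2) x := by
  have hne : Real.exp x - 1 ≠ 0 := by
    have : 1 < Real.exp x := by
      rw [show (1:ℝ) = Real.exp 0 from (Real.exp_zero).symm]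
      exact Real.exp_lt_exp.2 hx
    linarith
  have h := (hasDerivAt_pow 2 x).div ((Real.hasDerivAt_exp x).sub_const 1) hne
  have he : ((2:ℕ) : ℝ) * x ^ (2 - 1) * (Real.exp x - 1) - x ^ 2 * Real.exp x =
      x * Real.exp x * fB x := by
    have hinv : Real.exp (-x) = (Real.exp x)⁻¹ := Real.exp_neg x
    have hx0 : Real.exp x ≠ 0 := Real.exp_ne_zero x
    simp only [fB, hinv]
    field_simp
    ring
  rw [show ((fun x : ℝ => x ^ 2) / fun x => Real.exp x - 1) = gB from rfl] at h
  rw [← he]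
  exact h

lemma gB_contOn {a b : ℝ} (ha : 0 < a) : ContinuousOn gB (Icc a b) := by
  apply ContinuousOn.div (by fun_prop) (by fun_prop)
  intro x hx
  have : 1 < Real.exp x := by
    rw [show (1:ℝ) = Real.exp 0 from (Real.exp_zero).symm]
    exact Real.exp_lt_exp.2 (lt_of_lt_of_le ha hx.1)
  linarith

lemma gB_max {l₀ : ℝ} (h0 : 0 < l₀) (hr : fB l₀ = 0) {l : ℝ} (hl : 0 < l)
    (hne : l ≠ l₀) : gB l < gB l₀ := by
  rcases lt_or_gt_of_ne hne with h | h
  · have hmono : StrictMonoOn gB (Icc l l₀) := by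
      apply strictMonoOn_of_deriv_pos (convex_Icc _ _) (gB_contOn hl)
      intro x hx
      rw [interior_Icc] at hx
      have hx0 : 0 < x := hl.trans hx.1
      rw [(gB_hasDeriv hx0).deriv]
      have hf : 0 < fB x := fB_pos_of_lt h0 hr hx0 (hx.2.trans_le le_rfl)
      have hsq : 0 < (Real.exp x - 1) ^ 2 := by
        have : 1 < Real.exp x := by
          rw [show (1:ℝ) = Real.exp 0 from (Real.exp_zero).symm]
          exact Real.exp_lt_exp.2 hx0
        exact pow_pos (by linarith) 2
      exact div_pos (by positivity) hsq
    exact hmono (Set.mem_Icc.2 ⟨le_rfl, le_of_lt h⟩) (Set.mem_Icc.2 ⟨le_of_lt h, le_rfl⟩) h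
  · have hanti : StrictAntiOn gB (Icc l₀ l) := by
      apply strictAntiOn_of_deriv_neg (convex_Icc _ _) (gB_contOn h0)
      intro x hx
      rw [interior_Icc] at hx
      have hx0 : 0 < x := h0.trans hx.1
      rw [(gB_hasDeriv hx0).deriv]
      have hf : fB x < 0 := fB_neg_of_gt h0 hr hx.1
      have hsq : 0 < (Real.exp x - 1) ^ 2 := by
        have : 1 < Real.exp x := by
          rw [show (1:ℝ) = Real.exp 0 from (Real.exp_zero).symm]
          exact Real.exp_lt_exp.2 hx0
        exact pow_pos (by linarith) 2
      apply div_neg_of_neg_of_pos _ hsq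
      have : 0 < x * Real.exp x := by positivity
      nlinarith
    exact hanti (Set.mem_Icc.2 ⟨le_rfl, le_of_lt h⟩) (Set.mem_Icc.2 ⟨le_of_lt h, le_rfl⟩) h

/-- The equation `λ = 2 (1 - e^{-λ})` has a unique positive root `λ₀`, and the function
`g(λ) = λ² / (e^λ - 1)` attains its unique global maximum on `(0,∞)` at `λ = λ₀`. -/
theorem bernoulli_optimal_rate :
    (∃! l : ℝ, 0 < l ∧ l = 2 * (1 - Real.exp (-l))) ∧
    (∀ l₀ : ℝ, 0 < l₀ → l₀ = 2 * (1 - Real.exp (-l₀)) →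
      ∀ l : ℝ, 0 < l → l ≠ l₀ →
        l ^ 2 / (Real.exp l - 1) < l₀ ^ 2 / (Real.exp l₀ - 1)) := by
  constructor
  · obtain ⟨l₀, h0, hz⟩ := root_exists
    refine ⟨l₀, ⟨h0, by unfold fB at hz; linarith⟩, ?_⟩
    rintro y ⟨hy0, hy⟩
    have hyz : fB y = 0 := by unfold fB; linarith
    by_contra hne
    rcases lt_or_gt_of_ne hne with h | h
    · have := fB_pos_of_lt h0 hz hy0 h
      rw [hyz] at this; exact lt_irrefl 0 this
    · have := fB_neg_of_gt h0 hz h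
      rw [hyz] at this; exact lt_irrefl 0 this
  · intro l₀ h0 hr l hl hne
    have hz : fB l₀ = 0 := by unfold fB; linarith
    exact gB_max h0 hz hl hne
end

section
/- Let q ∈ (0,1) and define, for real c > 0, I(c) = ∑_{y=1}^∞ [log(1-q^y)·(1-q^y)^c - log(1-q^{y-1})·(1-q^{y-1})^c]² / [(1-q^y)^c - (1-q^{y-1})^c] (with the y = 1 term interpreted with (1-q^0)^c = 0). Then, letting c → ∞ through the sequence c = q^{-r} for positive integers r, the limit lim_{r→∞} c²·I(c) exists and equals ψ_∞ = ∑_{k=-∞}^{∞} q^{2k}·(q^{-1} - 1)² / [exp(q^{k-1}) - exp(q^{k})], where the sum is over all integers k. -/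
open Filter
set_option maxHeartbeats 1000000

/-- Fisher information for the cardinality `c` from one observation of the maximum of `c`
independent geometric variables with CDF `1 - q ^ x`, `x = 1, 2, …`: summing over the values
`y = n + 1`, `n = 0, 1, 2, …` (note `(1 - q^0)^c = 0` for `c > 0` and `Real.log 0 = 0`,
matching the convention for the `y = 1` term). Here the outer powers `^ c` are real powers. -/
noncomputable def geomFisherInfo (q c : ℝ) : ℝ :=
  ∑' n : ℕ,
    (Real.log (1 - q ^ (n + 1)) * (1 - q ^ (n + 1)) ^ c -
      Real.log (1 - q ^ n) * (1 - q ^ n) ^ c) ^ 2 /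
    ((1 - q ^ (n + 1)) ^ c - (1 - q ^ n) ^ c)

open Topology

set_option linter.unusedSectionVars false

namespace GeomFisherAux

noncomputable def cc (q : ℝ) (r : ℕ) : ℝ := q ^ (-(r : ℤ))

noncomputable def termF (q c : ℝ) (n : ℕ) : ℝ :=
  (Real.log (1 - q ^ (n + 1)) * (1 - q ^ (n + 1)) ^ c -
      Real.log (1 - q ^ n) * (1 - q ^ n) ^ c) ^ 2 /
    ((1 - q ^ (n + 1)) ^ c - (1 - q ^ n) ^ c)

noncomputable def g (q : ℝ) (r : ℕ) (k : ℤ) : ℝ :=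
  if -(r : ℤ) ≤ k then (cc q r) ^ 2 * termF q (cc q r) ((k + r).toNat) else 0

noncomputable def T (q : ℝ) (k : ℤ) : ℝ :=
  (-(q ^ (k + 1)) * Real.exp (-q ^ (k + 1)) - -(q ^ k) * Real.exp (-q ^ k)) ^ 2 /
    (Real.exp (-q ^ (k + 1)) - Real.exp (-q ^ k))

noncomputable def S (q : ℝ) (k : ℤ) : ℝ :=
  q ^ (2 * k) * (q⁻¹ - 1) ^ 2 / (Real.exp (q ^ (k - 1)) - Real.exp (q ^ k))

noncomputable def w (q : ℝ) (k : ℤ) : ℝ := q ^ (2 * k) * Real.exp (-q ^ k)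

noncomputable def bound (q : ℝ) (k : ℤ) : ℝ :=
  if k < 0 then
    (1 / ((1 - q) ^ 2 * (1 - Real.exp (-(1 - q))))) * (q ^ k * q ^ k * Real.exp (-q ^ (k + 1)))
  else (Real.exp (1 / (1 - q)) / (1 - q) ^ 3) * q ^ k

lemma log_one_sub_le {x : ℝ} (hx1 : x < 1) : Real.log (1 - x) ≤ -x := by
  have := Real.log_le_sub_one_of_pos (x := 1 - x) (by linarith)
  linarith

lemma log_one_sub_ge {x : ℝ} (hx1 : x < 1) : -(x / (1 - x)) ≤ Real.log (1 - x) := by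
  have h1 : (0:ℝ) < 1 - x := by linarith
  have h2 := Real.log_le_sub_one_of_pos (x := (1 - x)⁻¹) (by positivity)
  have h3 : Real.log (1 - x)⁻¹ = -Real.log (1 - x) := Real.log_inv _
  have h4 : (1 - x)⁻¹ - 1 = x / (1 - x) := by field_simp; ring
  linarith

section
variable {q : ℝ} (hq0 : 0 < q) (hq1 : q < 1)
include hq0 hq1

lemma pow_le_q {n : ℕ} (hn : 1 ≤ n) : q ^ n ≤ q := by
  simpa using pow_le_pow_of_le_one hq0.le hq1.le hn

lemma pow_lt_one' {n : ℕ} (hn : 1 ≤ n) : q ^ n < 1 := (pow_le_q hq0 hq1 hn).trans_lt hq1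

lemma pow_le_one' (n : ℕ) : q ^ n ≤ 1 := _root_.pow_le_one₀ hq0.le hq1.le

lemma one_sub_pos' {n : ℕ} (hn : 1 ≤ n) : 0 < 1 - q ^ n := by
  linarith [pow_lt_one' hq0 hq1 hn]

lemma cc_pos (r : ℕ) : 0 < cc q r := zpow_pos hq0 _

lemma zq_pos (k : ℤ) : 0 < q ^ k := zpow_pos hq0 _

lemma zq_anti {k m : ℤ} (h : k ≤ m) : q ^ m ≤ q ^ k :=
  (zpow_right_strictAnti₀ hq0 hq1).antitone h

lemma zq_le_one {k : ℤ} (hk : 0 ≤ k) : q ^ k ≤ 1 := by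
  simpa using zq_anti hq0 hq1 hk

lemma one_le_zq {k : ℤ} (hk : k ≤ 0) : 1 ≤ q ^ k := by
  simpa using zq_anti hq0 hq1 hk

lemma cc_mul_pow (r n : ℕ) : cc q r * q ^ n = q ^ ((n : ℤ) - r) := by
  rw [cc, ← zpow_natCast q n, ← zpow_add₀ hq0.ne']
  ring_nf

/-- `A` facts -/
lemma A_nonneg (c : ℝ) (n : ℕ) : 0 ≤ (1 - q ^ n) ^ c :=
  Real.rpow_nonneg (by linarith [pow_le_one' hq0 hq1 n]) c

lemma A_le_one {c : ℝ} (hc : 0 ≤ c) (n : ℕ) : (1 - q ^ n) ^ c ≤ 1 :=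
  Real.rpow_le_one (by linarith [pow_le_one' hq0 hq1 n])
    (by linarith [pow_pos hq0 n]) hc

lemma A_eq_exp (c : ℝ) {n : ℕ} (hn : 1 ≤ n) :
    (1 - q ^ n) ^ c = Real.exp (c * Real.log (1 - q ^ n)) := by
  rw [Real.rpow_def_of_pos (one_sub_pos' hq0 hq1 hn), mul_comm]

lemma A_lt {c : ℝ} (hc : 0 < c) (n : ℕ) : (1 - q ^ n) ^ c < (1 - q ^ (n + 1)) ^ c := by
  refine Real.rpow_lt_rpow (by linarith [pow_le_one' hq0 hq1 n]) ?_ hc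
  have : q ^ (n + 1) < q ^ n := pow_lt_pow_right_of_lt_one₀ hq0 hq1 (Nat.lt_succ_self n)
  linarith

lemma clog_le {c : ℝ} (hc : 0 < c) {n : ℕ} (hn : 1 ≤ n) :
    c * Real.log (1 - q ^ n) ≤ -(c * q ^ n) := by
  have h := log_one_sub_le (x := q ^ n) (pow_lt_one' hq0 hq1 hn)
  nlinarith

lemma clog_ge {c : ℝ} (hc : 0 < c) {n : ℕ} (hn : 1 ≤ n) :
    -(c * q ^ n / (1 - q)) ≤ c * Real.log (1 - q ^ n) := by
  have h := log_one_sub_ge (x := q ^ n) (pow_lt_one' hq0 hq1 hn)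
  have h1 : 0 < 1 - q ^ n := one_sub_pos' hq0 hq1 hn
  have h2 : 1 - q ≤ 1 - q ^ n := by linarith [pow_le_q hq0 hq1 hn]
  have h3 : q ^ n / (1 - q ^ n) ≤ q ^ n / (1 - q) :=
    div_le_div_of_nonneg_left (by positivity) (by linarith) h2
  have h4 := mul_le_mul_of_nonneg_left h3 hc.le
  have h5 := mul_le_mul_of_nonneg_left h hc.le
  have e1 : c * (q ^ n / (1 - q)) = c * q ^ n / (1 - q) := (mul_div_assoc c _ _).symm
  linarith

/-- lower bound on the increment of `c * log (1 - q ^ ·)`. -/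
lemma clog_diff {c : ℝ} (hc : 0 < c) {n : ℕ} (hn : 1 ≤ n) :
    c * q ^ n * (1 - q) ≤
      c * Real.log (1 - q ^ (n + 1)) - c * Real.log (1 - q ^ n) := by
  have h1 : 0 < 1 - q ^ n := one_sub_pos' hq0 hq1 hn
  have h1' : 0 < 1 - q ^ (n + 1) := one_sub_pos' hq0 hq1 (by omega)
  set t : ℝ := (q ^ n - q ^ (n + 1)) / (1 - q ^ (n + 1)) with ht
  have hqq : q ^ (n + 1) < q ^ n := pow_lt_pow_right_of_lt_one₀ hq0 hq1 (Nat.lt_succ_self n)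
  have ht0 : 0 < t := div_pos (by linarith) h1'
  have ht1 : t < 1 := by
    rw [ht, div_lt_one h1']
    have : q ^ n < 1 := pow_lt_one' hq0 hq1 hn
    linarith
  have key : Real.log (1 - q ^ n) - Real.log (1 - q ^ (n + 1)) ≤ -t := by
    have h5 : (1 - q ^ n) / (1 - q ^ (n + 1)) = 1 - t := by
      rw [ht]; field_simp; ring
    have := log_one_sub_le ht1
    rw [← h5] at this
    rw [Real.log_div (by linarith) (by linarith)] at this
    linarith
  have ht2 : q ^ n * (1 - q) ≤ t := by
    have hnum : q ^ n - q ^ (n + 1) = q ^ n * (1 - q) := by ring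
    rw [ht, hnum, le_div_iff₀ h1']
    nlinarith [pow_pos hq0 (n + 1), mul_pos (pow_pos hq0 n) (sub_pos.mpr hq1)]
  linarith [mul_le_mul_of_nonneg_left ht2 hc.le, mul_le_mul_of_nonneg_left key hc.le]



lemma term_nonneg {c : ℝ} (hc : 0 < c) (n : ℕ) : 0 ≤ termF q c n := by
  have h := A_lt hq0 hq1 hc n
  exact div_nonneg (sq_nonneg _) (by linarith)

lemma key_bound {r : ℕ} (hr : 1 ≤ r) (n : ℕ) :
    (cc q r) ^ 2 * termF q (cc q r) n ≤ bound q ((n : ℤ) - r) := by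
  have h1q : (0:ℝ) < 1 - q := by linarith
  have hc : 0 < cc q r := cc_pos hq0 hq1 r
  have heq : (cc q r) ^ 2 * termF q (cc q r) n =
      (cc q r * (Real.log (1 - q ^ (n + 1)) * (1 - q ^ (n + 1)) ^ (cc q r)) -
        cc q r * (Real.log (1 - q ^ n) * (1 - q ^ n) ^ (cc q r))) ^ 2 /
      ((1 - q ^ (n + 1)) ^ (cc q r) - (1 - q ^ n) ^ (cc q r)) := by
    rw [termF]; ring
  rw [heq]
  set c := cc q r with hcdef
  set k : ℤ := (n : ℤ) - r with hk
  set A1 := (1 - q ^ (n + 1)) ^ c with hA1def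
  set A0 := (1 - q ^ n) ^ c with hA0def
  set L1 := Real.log (1 - q ^ (n + 1)) with hL1def
  set L0 := Real.log (1 - q ^ n) with hL0def
  have hlt : A0 < A1 := A_lt hq0 hq1 hc n
  have hA0nonneg : 0 ≤ A0 := A_nonneg hq0 hq1 c n
  have hA1pos : 0 < A1 := lt_of_le_of_lt hA0nonneg hlt
  have hA1le1 : A1 ≤ 1 := A_le_one hq0 hq1 hc.le (n + 1)
  have hck : c * q ^ n = q ^ k := cc_mul_pow hq0 hq1 r n
  have hck1 : c * q ^ (n + 1) = q ^ (k + 1) := by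
    rw [cc_mul_pow hq0 hq1 r (n + 1)]
    congr 1; push_cast; ring
  have hzk : 0 < q ^ k := zq_pos hq0 hq1 k
  have hzk1 : 0 < q ^ (k + 1) := zq_pos hq0 hq1 (k + 1)
  have hkk1 : q ^ (k + 1) ≤ q ^ k := zq_anti hq0 hq1 (by omega)
  -- numerator bounds
  have hL1np : L1 ≤ 0 := Real.log_nonpos (by nlinarith [pow_le_one' hq0 hq1 (n+1)]) (by nlinarith [pow_pos hq0 (n+1)])
  have hL0np : L0 ≤ 0 := Real.log_nonpos (by nlinarith [pow_le_one' hq0 hq1 n]) (by nlinarith [pow_pos hq0 n])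
  have hx_np : c * (L1 * A1) ≤ 0 :=
    mul_nonpos_of_nonneg_of_nonpos hc.le (mul_nonpos_of_nonpos_of_nonneg hL1np hA1pos.le)
  have hy_np : c * (L0 * A0) ≤ 0 :=
    mul_nonpos_of_nonneg_of_nonpos hc.le (mul_nonpos_of_nonpos_of_nonneg hL0np hA0nonneg)
  have hL1ge : -(c * q ^ (n + 1) / (1 - q)) ≤ c * L1 := clog_ge hq0 hq1 hc (by omega)
  have b1 : -(c * (L1 * A1)) ≤ q ^ k / (1 - q) * A1 := by
    have i2 : (-(c * L1)) * A1 ≤ (c * q ^ (n + 1) / (1 - q)) * A1 :=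
      mul_le_mul_of_nonneg_right (by linarith) hA1pos.le
    have i3 : c * q ^ (n + 1) / (1 - q) = q ^ (k + 1) / (1 - q) := by rw [hck1]
    have i4 : q ^ (k + 1) / (1 - q) ≤ q ^ k / (1 - q) := (div_le_div_iff_of_pos_right h1q).mpr hkk1
    have i5 : (q ^ (k + 1) / (1 - q)) * A1 ≤ (q ^ k / (1 - q)) * A1 :=
      mul_le_mul_of_nonneg_right i4 hA1pos.le
    nlinarith
  have b0 : -(c * (L0 * A0)) ≤ q ^ k / (1 - q) * A1 := by
    rcases Nat.eq_zero_or_pos n with hn0 | hn1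
    · have hz : (1:ℝ) - q ^ n = 0 := by rw [hn0]; simp
      have hA0z : A0 = 0 := by rw [hA0def, hz, Real.zero_rpow hc.ne']
      rw [hA0z]
      have : q ^ k / (1 - q) * A1 ≥ 0 := by positivity
      simp only [mul_zero, neg_zero]
      linarith
    · have hL0ge : -(c * q ^ n / (1 - q)) ≤ c * L0 := clog_ge hq0 hq1 hc hn1
      have i2 : (-(c * L0)) * A0 ≤ (c * q ^ n / (1 - q)) * A0 :=
        mul_le_mul_of_nonneg_right (by linarith) hA0nonneg
      have i3 : c * q ^ n / (1 - q) = q ^ k / (1 - q) := by rw [hck]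
      have i5 : q ^ k / (1 - q) * A0 ≤ q ^ k / (1 - q) * A1 :=
        mul_le_mul_of_nonneg_left hlt.le (by positivity)
      nlinarith
  have hNb : (c * (L1 * A1) - c * (L0 * A0)) ^ 2 ≤ (q ^ k / (1 - q) * A1) ^ 2 :=
    sq_le_sq' (by linarith) (by linarith)
  have hA1ub : A1 ≤ Real.exp (-q ^ (k + 1)) := by
    rw [hA1def, A_eq_exp hq0 hq1 c (by omega : 1 ≤ n + 1)]
    apply Real.exp_le_exp.mpr
    have := clog_le hq0 hq1 hc (by omega : 1 ≤ n + 1)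
    rw [hck1] at this
    linarith [this]
  rcases lt_or_ge k 0 with hkneg | hknn
  · -- k < 0
    have hq1k : 1 ≤ q ^ k := one_le_zq hq0 hq1 hkneg.le
    have hE : Real.exp (-(1 - q)) < 1 := by
      rw [Real.exp_lt_one_iff]; linarith
    have hEpos : 0 < Real.exp (-(1 - q)) := Real.exp_pos _
    have hη : 0 < 1 - Real.exp (-(1 - q)) := by linarith
    have hD : (1 - Real.exp (-(1 - q))) * A1 ≤ A1 - A0 := by
      rcases Nat.eq_zero_or_pos n with hn0 | hn1
      · have hz : (1:ℝ) - q ^ n = 0 := by rw [hn0]; simp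
        have hA0z : A0 = 0 := by rw [hA0def, hz, Real.zero_rpow hc.ne']
        rw [hA0z]; nlinarith
      · have hdiff := clog_diff hq0 hq1 hc hn1
        have e5 : c * q ^ n * (1 - q) = q ^ k * (1 - q) := by rw [hck]
        have h1q' : 1 - q ≤ c * L1 - c * L0 := by nlinarith
        have eA0 : A0 = Real.exp (c * L0) := A_eq_exp hq0 hq1 c hn1
        have eA1 : A1 = Real.exp (c * L1) := A_eq_exp hq0 hq1 c (by omega)
        have h6 : A0 ≤ Real.exp (-(1 - q)) * A1 := by
          rw [eA0, eA1, ← Real.exp_add]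
          exact Real.exp_le_exp.mpr (by linarith)
        nlinarith
    calc (c * (L1 * A1) - c * (L0 * A0)) ^ 2 / (A1 - A0)
        ≤ (q ^ k / (1 - q) * A1) ^ 2 / ((1 - Real.exp (-(1 - q))) * A1) :=
          div_le_div₀ (sq_nonneg _) hNb (by positivity) hD
      _ = q ^ k * q ^ k * A1 / ((1 - q) ^ 2 * (1 - Real.exp (-(1 - q)))) := by
          have hgen : ∀ E A Q : ℝ, A ≠ 0 → E ≠ 0 →
              (Q / (1 - q) * A) ^ 2 / (E * A) = Q * Q * A / ((1 - q) ^ 2 * E) := by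
            intro E A Q hA hE; field_simp
          exact hgen _ _ _ hA1pos.ne' hη.ne'
      _ ≤ q ^ k * q ^ k * Real.exp (-q ^ (k + 1)) /
            ((1 - q) ^ 2 * (1 - Real.exp (-(1 - q)))) := by
          refine (div_le_div_iff_of_pos_right (mul_pos (by positivity) hη)).mpr ?_
          exact mul_le_mul_of_nonneg_left hA1ub (by positivity)
      _ = bound q k := by rw [bound, if_pos hkneg]; ring
  · -- 0 ≤ k
    have hn1 : 1 ≤ n := by omega
    have hqk1 : q ^ k ≤ 1 := zq_le_one hq0 hq1 hknn
    have hdiff := clog_diff hq0 hq1 hc hn1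
    have e5 : c * q ^ n * (1 - q) = q ^ k * (1 - q) := by rw [hck]
    have eA0 : A0 = Real.exp (c * L0) := A_eq_exp hq0 hq1 c hn1
    have eA1 : A1 = Real.exp (c * L1) := A_eq_exp hq0 hq1 c (by omega)
    have hA0pos : 0 < A0 := by rw [eA0]; exact Real.exp_pos _
    have hDge : A0 * (q ^ k * (1 - q)) ≤ A1 - A0 := by
      have h7 : A1 = A0 * Real.exp (c * L1 - c * L0) := by
        rw [eA0, eA1, ← Real.exp_add]; ring_nf
      have h8 := Real.add_one_le_exp (c * L1 - c * L0)
      nlinarith [mul_le_mul_of_nonneg_left h8 hA0pos.le]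
    have hA0lb : Real.exp (-(1 / (1 - q))) ≤ A0 := by
      rw [eA0]
      apply Real.exp_le_exp.mpr
      have h9 := clog_ge hq0 hq1 hc hn1
      rw [hck] at h9
      have h10 : q ^ k / (1 - q) ≤ 1 / (1 - q) := (div_le_div_iff_of_pos_right h1q).mpr hqk1
      linarith
    have hDlb : Real.exp (-(1 / (1 - q))) * (q ^ k * (1 - q)) ≤ A1 - A0 := by
      have := mul_le_mul_of_nonneg_right hA0lb (by positivity : (0:ℝ) ≤ q ^ k * (1 - q))
      linarith
    have hNb' : (c * (L1 * A1) - c * (L0 * A0)) ^ 2 ≤ (q ^ k / (1 - q)) ^ 2 := by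
      have i6 : q ^ k / (1 - q) * A1 ≤ q ^ k / (1 - q) :=
        mul_le_of_le_one_right (by positivity) hA1le1
      exact sq_le_sq' (by linarith) (by linarith)
    calc (c * (L1 * A1) - c * (L0 * A0)) ^ 2 / (A1 - A0)
        ≤ (q ^ k / (1 - q)) ^ 2 / (Real.exp (-(1 / (1 - q))) * (q ^ k * (1 - q))) :=
          div_le_div₀ (sq_nonneg _) hNb' (by positivity) hDlb
      _ = (Real.exp (1 / (1 - q)) / (1 - q) ^ 3) * q ^ k := by
          rw [Real.exp_neg]
          have hgen : ∀ E Q : ℝ, 0 < E → 0 < Q →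
              (Q / (1 - q)) ^ 2 / (E⁻¹ * (Q * (1 - q))) = E / (1 - q) ^ 3 * Q := by
            intro E Q hE hQ; field_simp
          exact hgen _ _ (Real.exp_pos _) hzk
      _ = bound q k := by rw [bound, if_neg (not_lt.mpr hknn)]


lemma exp_neg_le' {y : ℝ} (hy : 0 < y) : Real.exp (-y) ≤ 27 / y ^ 3 := by
  have h1 : y / 3 ≤ Real.exp (y / 3) := by
    have := Real.add_one_le_exp (y / 3); linarith
  have h2 : (y / 3) ^ 3 ≤ Real.exp (y / 3) ^ 3 :=
    pow_le_pow_left₀ (by linarith) h1 3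
  have h3 : Real.exp (y / 3) ^ 3 = Real.exp y := by
    rw [← Real.exp_nat_mul]; norm_num; ring_nf
  rw [Real.exp_neg, div_eq_mul_inv]
  have h4 : (y / 3) ^ 3 ≤ Real.exp y := by rw [← h3]; exact h2
  have h5 : 0 < (y / 3) ^ 3 := by positivity
  have h6 : (Real.exp y)⁻¹ ≤ ((y / 3) ^ 3)⁻¹ :=
    inv_anti₀ h5 h4
  have h7 : ((y / 3) ^ 3)⁻¹ = 27 * (y ^ 3)⁻¹ := by
    rw [div_pow]; rw [inv_div]; norm_num; ring
  rw [h7] at h6; linarith [h6]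

lemma zq_mul (a b : ℤ) : q ^ a * q ^ b = q ^ (a + b) := (zpow_add₀ hq0.ne' a b).symm

/-- key geometric-domination of the doubly-exponential tail -/
lemma summable_qq_exp (j : ℤ) :
    Summable (fun n : ℕ => q ^ (-(n : ℤ)) * q ^ (-(n : ℤ)) * Real.exp (-q ^ (-(n : ℤ) + j))) := by
  refine Summable.of_nonneg_of_le (f := fun n : ℕ => (27 * q ^ (-3 * j)) * q ^ n)
    (fun n => by positivity) (fun n => ?_)
    ((summable_geometric_of_lt_one hq0.le hq1).mul_left _)
  have hy : 0 < q ^ (-(n : ℤ) + j) := zq_pos hq0 hq1 _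
  have h1 : Real.exp (-q ^ (-(n : ℤ) + j)) ≤ 27 / (q ^ (-(n : ℤ) + j)) ^ 3 :=
    exp_neg_le' hq0 hq1 hy
  have h2 : (q ^ (-(n : ℤ) + j)) ^ 3 = q ^ ((-(n : ℤ) + j) * 3) := by
    rw [← zpow_natCast (q ^ (-(n : ℤ) + j)) 3, ← zpow_mul]
    norm_num
  have e : ∀ a b c : ℤ, q ^ a * q ^ b * (27 / q ^ c) = 27 * q ^ (a + b - c) := by
    intro a b c
    rw [zpow_sub₀ hq0.ne', zpow_add₀ hq0.ne']
    ring
  calc q ^ (-(n : ℤ)) * q ^ (-(n : ℤ)) * Real.exp (-q ^ (-(n : ℤ) + j))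
      ≤ q ^ (-(n : ℤ)) * q ^ (-(n : ℤ)) * (27 / (q ^ (-(n : ℤ) + j)) ^ 3) := by
        apply mul_le_mul_of_nonneg_left h1 (by positivity)
    _ = 27 * q ^ ((-(n : ℤ)) + (-(n : ℤ)) - (-(n : ℤ) + j) * 3) := by rw [h2, e]
    _ = (27 * q ^ (-3 * j)) * q ^ n := by
        rw [mul_assoc, ← zpow_natCast q n, zq_mul hq0 hq1]
        congr 2
        omega

lemma bound_summable : Summable (bound q) := by
  have h1q : (0:ℝ) < 1 - q := by linarith
  have hE : Real.exp (-(1 - q)) < 1 := by rw [Real.exp_lt_one_iff]; linarith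
  have h1 : (0:ℝ) < 1 - Real.exp (-(1 - q)) := by linarith
  apply Summable.of_nat_of_neg
  · refine Summable.of_nonneg_of_le
      (f := fun n : ℕ => (Real.exp (1 / (1 - q)) / (1 - q) ^ 3) * q ^ n)
      (fun n => ?_) (fun n => ?_)
      ((summable_geometric_of_lt_one hq0.le hq1).mul_left _)
    · simp only [bound, if_neg ((Nat.cast_nonneg (α := ℤ) n).not_gt)]
      positivity
    · simp only [bound, if_neg ((Nat.cast_nonneg (α := ℤ) n).not_gt), zpow_natCast]
      exact le_refl _
  · -- negative side
    have hbase := (summable_qq_exp hq0 hq1 1).mul_left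
      (1 / ((1 - q) ^ 2 * (1 - Real.exp (-(1 - q)))))
    refine Summable.of_nonneg_of_le (fun n => ?_) (fun n => ?_)
      (hbase.add ((summable_geometric_of_lt_one hq0.le hq1).mul_left
        (Real.exp (1 / (1 - q)) / (1 - q) ^ 3)))
    · simp only [bound]
      split_ifs
      · positivity
      · positivity
    · simp only [bound]
      split_ifs with h
      · refine le_add_of_le_of_nonneg (le_of_eq rfl) (by positivity)
      · have hn0 : n = 0 := by omega
        subst hn0
        refine le_add_of_nonneg_of_le (by positivity) ?_
        norm_num

lemma zq_lt {k m : ℤ} (h : k < m) : q ^ m < q ^ k :=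
  (zpow_right_strictAnti₀ hq0 hq1) h

lemma S_denom_pos (k : ℤ) : 0 < Real.exp (q ^ (k - 1)) - Real.exp (q ^ k) := by
  have h := zq_lt hq0 hq1 (show k - 1 < k by omega)
  have := Real.exp_lt_exp.mpr h
  linarith

lemma S_nonneg (k : ℤ) : 0 ≤ S q k := by
  have := S_denom_pos hq0 hq1 k
  have h2 : (0:ℝ) ≤ q ^ (2 * k) := (zq_pos hq0 hq1 _).le
  exact div_nonneg (by positivity) this.le

lemma w_summable : Summable (w q) := by
  apply Summable.of_nat_of_neg
  · refine Summable.of_nonneg_of_le (f := fun n : ℕ => q ^ n)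
      (fun n => ?_) (fun n => ?_) (summable_geometric_of_lt_one hq0.le hq1)
    · have := (zq_pos hq0 hq1 (2 * (n:ℤ))).le
      have := (Real.exp_pos (-q ^ (n:ℤ))).le
      exact mul_nonneg ‹_› ‹_›
    · have h1 : Real.exp (-q ^ ((n:ℕ):ℤ)) ≤ 1 :=
        (Real.exp_lt_one_iff.mpr (by linarith [zq_pos hq0 hq1 ((n:ℕ):ℤ)])).le
      have h2 : q ^ (2 * ((n:ℕ):ℤ)) ≤ q ^ ((n:ℕ):ℤ) := zq_anti hq0 hq1 (by omega)
      have h3 : (0:ℝ) ≤ q ^ (2 * ((n:ℕ):ℤ)) := (zq_pos hq0 hq1 _).le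
      calc w q n ≤ q ^ (2 * ((n:ℕ):ℤ)) * 1 :=
            mul_le_mul_of_nonneg_left h1 h3
        _ = q ^ (2 * ((n:ℕ):ℤ)) := mul_one _
        _ ≤ q ^ ((n:ℕ):ℤ) := h2
        _ = q ^ n := zpow_natCast q n
  · refine (summable_qq_exp hq0 hq1 0).congr (fun n => ?_)
    rw [w, show (2 : ℤ) * (-(n:ℤ)) = -(n:ℤ) + -(n:ℤ) by ring]
    simp only [add_zero]
    rw [← zq_mul hq0 hq1]

lemma S_summable : Summable (S q) := by
  have h1q : (0:ℝ) < 1 - q := by linarith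
  have hE : Real.exp (-(1 - q)) < 1 := by rw [Real.exp_lt_one_iff]; linarith
  have hη : (0:ℝ) < 1 - Real.exp (-(1 - q)) := by linarith
  apply Summable.of_nat_of_neg
  · refine Summable.of_nonneg_of_le
      (f := fun n : ℕ => ((q⁻¹ - 1) ^ 2 * q / (1 - q)) * q ^ n)
      (fun n => S_nonneg hq0 hq1 _) (fun n => ?_)
      ((summable_geometric_of_lt_one hq0.le hq1).mul_left _)
    set k : ℤ := (n : ℤ) with hkdef
    have ha : 0 < q ^ (k - 1) := zq_pos hq0 hq1 _
    have hb : 0 < q ^ k := zq_pos hq0 hq1 _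
    have hden : q ^ (k - 1) - q ^ k ≤ Real.exp (q ^ (k - 1)) - Real.exp (q ^ k) := by
      have h8 := Real.add_one_le_exp (q ^ (k - 1) - q ^ k)
      have h9 : Real.exp (q ^ (k - 1)) = Real.exp (q ^ k) * Real.exp (q ^ (k - 1) - q ^ k) := by
        rw [← Real.exp_add]; congr 1; ring
      have h10 : 1 + q ^ k ≤ Real.exp (q ^ k) := by
        have := Real.add_one_le_exp (q ^ k); linarith
      have hab : q ^ k ≤ q ^ (k - 1) := zq_anti hq0 hq1 (by omega)
      nlinarith [Real.exp_pos (q ^ k)]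
    have hden2 : q ^ (k - 1) * (1 - q) ≤ Real.exp (q ^ (k - 1)) - Real.exp (q ^ k) := by
      have : q ^ (k - 1) - q ^ k = q ^ (k - 1) * (1 - q) := by
        rw [mul_sub, mul_one, ← zpow_add_one₀ hq0.ne']
        congr 2
        omega
      linarith
    have hpos : (0:ℝ) < q ^ (k - 1) * (1 - q) := by positivity
    calc S q k ≤ q ^ (2 * k) * (q⁻¹ - 1) ^ 2 / (q ^ (k - 1) * (1 - q)) := by
          apply div_le_div_of_nonneg_left (by positivity) hpos hden2
      _ = ((q⁻¹ - 1) ^ 2 * q / (1 - q)) * q ^ k := by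
          have hgen : ∀ a b C2 : ℝ, 0 < a → (a * (b * q)) * C2 / (a * (1 - q)) =
              (C2 * q / (1 - q)) * b := by
            intro a b C2 hapos; field_simp
          rw [show (2:ℤ) * k = (k - 1) + (k + 1) by ring, ← zq_mul hq0 hq1]
          rw [show q ^ (k + 1) = q ^ k * q by rw [zpow_add_one₀ hq0.ne']]
          exact hgen _ _ _ ha
      _ = ((q⁻¹ - 1) ^ 2 * q / (1 - q)) * q ^ n := by rw [hkdef, zpow_natCast]
  · refine Summable.of_nonneg_of_le (fun n => S_nonneg hq0 hq1 _) (fun n => ?_)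
      (((summable_qq_exp hq0 hq1 (-1)).mul_left
        ((q⁻¹ - 1) ^ 2 / (1 - Real.exp (-(1 - q))))))
    set k : ℤ := -(n : ℤ) with hkdef
    have hk0 : k ≤ 0 := by omega
    have ha : 0 < q ^ (k - 1) := zq_pos hq0 hq1 _
    have hden : (1 - Real.exp (-(1 - q))) * Real.exp (q ^ (k - 1)) ≤
        Real.exp (q ^ (k - 1)) - Real.exp (q ^ k) := by
      have hab : 1 - q ≤ q ^ (k - 1) - q ^ k := by
        have h1 : q ^ (k - 1) - q ^ k = q ^ (k - 1) * (1 - q) := by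
          rw [mul_sub, mul_one, ← zpow_add_one₀ hq0.ne']
          congr 2
          omega
        have h2 : (1:ℝ) ≤ q ^ (k - 1) := one_le_zq hq0 hq1 (by omega)
        nlinarith
      have h3 : Real.exp (q ^ k) = Real.exp (q ^ (k - 1)) * Real.exp (q ^ k - q ^ (k - 1)) := by
        rw [← Real.exp_add]; congr 1; ring
      have h4 : Real.exp (q ^ k - q ^ (k - 1)) ≤ Real.exp (-(1 - q)) :=
        Real.exp_le_exp.mpr (by linarith)
      have h5 := Real.exp_pos (q ^ (k - 1))
      nlinarith
    have hnum : q ^ (2 * k) = q ^ k * q ^ k := by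
      rw [zq_mul hq0 hq1]; congr 1; ring
    calc S q k ≤ q ^ (2 * k) * (q⁻¹ - 1) ^ 2 /
          ((1 - Real.exp (-(1 - q))) * Real.exp (q ^ (k - 1))) := by
          apply div_le_div_of_nonneg_left (by positivity) (by positivity) hden
      _ = ((q⁻¹ - 1) ^ 2 / (1 - Real.exp (-(1 - q)))) *
            (q ^ k * q ^ k * Real.exp (-q ^ (k - 1))) := by
          have hgen : ∀ u v C2 E eta : ℝ, 0 < E → 0 < eta →
              u * v * C2 / (eta * E) = C2 / eta * (u * v * E⁻¹) := by
            intro u v C2 E eta hE heta; field_simp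
          rw [hnum, Real.exp_neg (q ^ (k - 1))]
          exact hgen _ _ _ _ _ (Real.exp_pos _) hη
      _ = ((q⁻¹ - 1) ^ 2 / (1 - Real.exp (-(1 - q)))) *
            (q ^ (-(n:ℤ)) * q ^ (-(n:ℤ)) * Real.exp (-q ^ (-(n:ℤ) + -1))) := by
          have hk1 : k - 1 = -(n:ℤ) + -1 := by omega
          rw [hk1, hkdef]

lemma alg_identity (a b u v : ℝ) (hu : 0 < u) (huv : u < v) :
    (a * u - b * v) ^ 2 / (v - u) = (a - b) ^ 2 / (u⁻¹ - v⁻¹) + (b ^ 2 * v - a ^ 2 * u) := by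
  have hv : 0 < v := lt_trans hu huv
  have hu' : u ≠ 0 := hu.ne'
  have hv' : v ≠ 0 := hv.ne'
  have hne : v - u ≠ 0 := sub_ne_zero.mpr huv.ne'
  have h1 : u⁻¹ - v⁻¹ = (v - u) / (u * v) := by field_simp
  rw [h1, div_div_eq_mul_div]
  field_simp
  ring

lemma T_eq (k : ℤ) : T q k = S q (k + 1) + (w q (k + 1) - w q k) := by
  have hb : 0 < q ^ (k + 1) := zq_pos hq0 hq1 _
  have hab : q ^ (k + 1) < q ^ k := zq_lt hq0 hq1 (by omega)
  have hu : 0 < Real.exp (-q ^ k) := Real.exp_pos _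
  have huv : Real.exp (-q ^ k) < Real.exp (-q ^ (k + 1)) := Real.exp_lt_exp.mpr (by linarith)
  have halg := alg_identity hq0 hq1 (q ^ k) (q ^ (k + 1)) (Real.exp (-q ^ k))
    (Real.exp (-q ^ (k + 1))) hu huv
  have hT : T q k = (q ^ k * Real.exp (-q ^ k) - q ^ (k + 1) * Real.exp (-q ^ (k + 1))) ^ 2 /
      (Real.exp (-q ^ (k + 1)) - Real.exp (-q ^ k)) := by
    rw [T]; congr 1; ring
  have hqk1 : q ^ (k + 1) = q ^ k * q := zpow_add_one₀ hq0.ne' k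
  have hS : S q (k + 1) = (q ^ k - q ^ (k + 1)) ^ 2 /
      ((Real.exp (-q ^ k))⁻¹ - (Real.exp (-q ^ (k + 1)))⁻¹) := by
    rw [S, show k + 1 - 1 = k by omega]
    rw [show Real.exp (q ^ k) = (Real.exp (-q ^ k))⁻¹ by rw [Real.exp_neg, inv_inv]]
    rw [show Real.exp (q ^ (k + 1)) = (Real.exp (-q ^ (k + 1)))⁻¹ by
      rw [Real.exp_neg, inv_inv]]
    congr 1
    have e1 : q ^ (k + 1) * (q⁻¹ - 1) = q ^ k - q ^ (k + 1) := by
      rw [mul_sub, mul_one]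
      congr 1
      rw [hqk1, mul_assoc, mul_inv_cancel₀ hq0.ne', mul_one]
    have e2 : q ^ (2 * (k + 1)) = q ^ (k + 1) * q ^ (k + 1) := by
      rw [zq_mul hq0 hq1]; congr 1; ring
    rw [e2, ← e1]
    ring
  have hw1 : w q (k + 1) = (q ^ (k + 1)) ^ 2 * Real.exp (-q ^ (k + 1)) := by
    rw [w]; congr 1
    rw [sq, zq_mul hq0 hq1]; congr 1; ring
  have hw0 : w q k = (q ^ k) ^ 2 * Real.exp (-q ^ k) := by
    rw [w]; congr 1
    rw [sq, zq_mul hq0 hq1]; congr 1; ring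
  rw [hT, hS, hw1, hw0]
  exact halg

lemma tsum_T_eq : ∑' k : ℤ, T q k = ∑' k : ℤ, S q k := by
  have hS := S_summable hq0 hq1
  have hw := w_summable hq0 hq1
  have hS1 : Summable (fun k : ℤ => S q (k + 1)) :=
    (Equiv.addRight (1 : ℤ)).summable_iff.mpr hS
  have hw1 : Summable (fun k : ℤ => w q (k + 1)) :=
    (Equiv.addRight (1 : ℤ)).summable_iff.mpr hw
  calc ∑' k : ℤ, T q k = ∑' k : ℤ, (S q (k + 1) + (w q (k + 1) - w q k)) :=
        tsum_congr (T_eq hq0 hq1)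
    _ = (∑' k : ℤ, S q (k + 1)) + ∑' k : ℤ, (w q (k + 1) - w q k) :=
        Summable.tsum_add hS1 (hw1.sub hw)
    _ = (∑' k : ℤ, S q k) + ((∑' k : ℤ, w q (k + 1)) - ∑' k : ℤ, w q k) := by
        have eS : (∑' k : ℤ, S q (k + 1)) = ∑' k : ℤ, S q k :=
          (Equiv.addRight (1 : ℤ)).tsum_eq (S q)
        rw [Summable.tsum_sub hw1 hw, eS]
    _ = ∑' k : ℤ, S q k := by
        have eW : (∑' k : ℤ, w q (k + 1)) = ∑' k : ℤ, w q k :=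
          (Equiv.addRight (1 : ℤ)).tsum_eq (w q)
        rw [eW]
        ring

lemma tendsto_qpow (m : ℤ) : Tendsto (fun r : ℕ => q ^ (m + r)) atTop (𝓝 0) := by
  have h := tendsto_pow_atTop_nhds_zero_of_lt_one hq0.le hq1
  have he : (fun r : ℕ => q ^ (m + r)) = fun r : ℕ => q ^ m * q ^ (r : ℕ) := by
    funext r; rw [← zpow_natCast q r, zq_mul hq0 hq1]
  rw [he]
  simpa using h.const_mul (q ^ m)

lemma tendsto_u (m : ℤ) :
    Tendsto (fun r : ℕ => cc q r * Real.log (1 - q ^ ((m + r).toNat))) atTop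
      (𝓝 (-q ^ m)) := by
  have hlow : Tendsto (fun r : ℕ => -(q ^ m / (1 - q ^ (m + r)))) atTop (𝓝 (-q ^ m)) := by
    have h1 : Tendsto (fun r : ℕ => 1 - q ^ (m + r)) atTop (𝓝 1) := by
      simpa using tendsto_const_nhds.sub (tendsto_qpow hq0 hq1 m)
    have h2 : Tendsto (fun r : ℕ => q ^ m / (1 - q ^ (m + r))) atTop (𝓝 (q ^ m / 1)) :=
      Tendsto.div tendsto_const_nhds h1 one_ne_zero
    rw [div_one] at h2
    exact h2.neg
  refine tendsto_of_tendsto_of_tendsto_of_le_of_le' hlow tendsto_const_nhds ?_ ?_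
  · filter_upwards [eventually_ge_atTop ((1 - m).toNat + 1)] with r hr
    have hmr : 1 ≤ m + r := by omega
    set n := (m + r).toNat with hn
    have hn1 : 1 ≤ n := by omega
    have hnm : (n : ℤ) = m + r := by omega
    have hc : 0 < cc q r := cc_pos hq0 hq1 r
    have hbase := log_one_sub_ge (x := q ^ n) (pow_lt_one' hq0 hq1 hn1)
    have hmul := mul_le_mul_of_nonneg_left hbase hc.le
    have hck : cc q r * q ^ n = q ^ m := by
      rw [cc_mul_pow hq0 hq1 r n]; congr 1; omega
    have hzq : q ^ ((n:ℕ) : ℤ) = q ^ (m + r) := by rw [hnm]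
    have e1 : cc q r * -(q ^ n / (1 - q ^ n)) = -(q ^ m / (1 - q ^ (m + r))) := by
      rw [mul_neg, ← mul_div_assoc, hck]
      congr 2
      rw [← zpow_natCast q n, hnm]
    rw [e1] at hmul
    exact hmul
  · filter_upwards [eventually_ge_atTop ((1 - m).toNat + 1)] with r hr
    have hmr : 1 ≤ m + r := by omega
    set n := (m + r).toNat with hn
    have hn1 : 1 ≤ n := by omega
    have hc : 0 < cc q r := cc_pos hq0 hq1 r
    have hck : cc q r * q ^ n = q ^ m := by
      rw [cc_mul_pow hq0 hq1 r n]; congr 1; omega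
    have h := clog_le hq0 hq1 hc hn1
    rw [hck] at h
    linarith

lemma tendsto_v (m : ℤ) :
    Tendsto (fun r : ℕ => (1 - q ^ ((m + r).toNat)) ^ (cc q r)) atTop
      (𝓝 (Real.exp (-q ^ m))) := by
  have h := (Real.continuous_exp.tendsto _).comp (tendsto_u hq0 hq1 m)
  apply Tendsto.congr' ?_ h
  filter_upwards [eventually_ge_atTop ((1 - m).toNat + 1)] with r hr
  have hmr : 1 ≤ m + r := by omega
  have hn1 : 1 ≤ (m + r).toNat := by omega
  exact (A_eq_exp hq0 hq1 (cc q r) hn1).symm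

lemma tendsto_g (k : ℤ) : Tendsto (fun r : ℕ => g q r k) atTop (𝓝 (T q k)) := by
  have hu1 := tendsto_u hq0 hq1 (k + 1)
  have hu0 := tendsto_u hq0 hq1 k
  have hv1 := tendsto_v hq0 hq1 (k + 1)
  have hv0 := tendsto_v hq0 hq1 k
  have hab : q ^ (k + 1) < q ^ k := zq_lt hq0 hq1 (by omega)
  have hne : Real.exp (-q ^ (k + 1)) - Real.exp (-q ^ k) ≠ 0 := by
    have := Real.exp_lt_exp.mpr (show -q ^ k < -q ^ (k + 1) by linarith)
    linarith
  have hmain := Tendsto.div (((hu1.mul hv1).sub (hu0.mul hv0)).pow 2) (hv1.sub hv0) hne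
  apply Tendsto.congr' ?_ hmain
  filter_upwards [eventually_ge_atTop ((1 - k).toNat + 1)] with r hr
  have hkr : 1 ≤ k + r := by omega
  have hif : -(r : ℤ) ≤ k := by omega
  have hsucc : (k + r).toNat + 1 = (k + 1 + r).toNat := by omega
  simp only [Pi.div_apply]
  rw [g, if_pos hif, termF, hsucc]
  ring

lemma bound_nonneg (k : ℤ) : 0 ≤ bound q k := by
  have h1q : (0:ℝ) < 1 - q := by linarith
  have hE : Real.exp (-(1 - q)) < 1 := by rw [Real.exp_lt_one_iff]; linarith
  have h1 : (0:ℝ) < 1 - Real.exp (-(1 - q)) := by linarith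
  simp only [bound]
  split_ifs <;> positivity

lemma g_nonneg (r : ℕ) (k : ℤ) : 0 ≤ g q r k := by
  simp only [g]
  split_ifs with h
  · exact mul_nonneg (sq_nonneg _) (term_nonneg hq0 hq1 (cc_pos hq0 hq1 r) _)
  · exact le_refl 0

lemma g_le_bound {r : ℕ} (hr : 1 ≤ r) (k : ℤ) : g q r k ≤ bound q k := by
  simp only [g]
  split_ifs with h
  · have hkb := key_bound hq0 hq1 hr ((k + r).toNat)
    rwa [show (((k + r).toNat : ℤ) - r) = k by omega] at hkb
  · exact bound_nonneg hq0 hq1 k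

lemma reindex (r : ℕ) :
    (q ^ (-(r : ℤ))) ^ 2 * geomFisherInfo q (q ^ (-(r : ℤ))) = ∑' k : ℤ, g q r k := by
  have h1 : (q ^ (-(r : ℤ))) = cc q r := rfl
  rw [h1, geomFisherInfo, ← tsum_mul_left]
  have hinj : Function.Injective (fun n : ℕ => (n : ℤ) - r) := by
    intro a b hab
    simp only at hab
    omega
  have hsupp : Function.support (g q r) ⊆ Set.range (fun n : ℕ => (n : ℤ) - r) := by
    intro k hk
    rcases le_or_gt (-(r : ℤ)) k with h | h
    · exact ⟨(k + r).toNat, by simp only; omega⟩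
    · exfalso
      apply hk
      simp only [g, if_neg (not_le.mpr h)]
  have hts := hinj.tsum_eq (f := g q r) hsupp
  rw [← hts]
  apply tsum_congr
  intro n
  simp only [g, if_pos (by omega : -(r : ℤ) ≤ (n : ℤ) - r)]
  rw [show (((n : ℤ) - r + r).toNat) = n by omega, termF]

end

end GeomFisherAux

open GeomFisherAux

/-- As `c → ∞` through the sequence `c = q^{-r}`, `r` a positive integer, `c² I(c)` converges
to `ψ_∞ = ∑_{k ∈ ℤ} q^{2k} (q⁻¹ - 1)² / (exp (q^{k-1}) - exp (q^k))`. -/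
theorem geom_fisher_limit (q : ℝ) (hq : q ∈ Set.Ioo (0 : ℝ) 1) :
    Tendsto
      (fun r : ℕ => (q ^ (-(r : ℤ))) ^ 2 * geomFisherInfo q (q ^ (-(r : ℤ))))
      atTop
      (nhds (∑' k : ℤ,
        q ^ (2 * k) * (q⁻¹ - 1) ^ 2 / (Real.exp (q ^ (k - 1)) - Real.exp (q ^ k)))) := by

  obtain ⟨hq0, hq1⟩ := hq
  have hmain : Tendsto (fun r : ℕ => ∑' k : ℤ, g q r k) atTop
      (𝓝 (∑' k : ℤ, T q k)) := by
    refine tendsto_tsum_of_dominated_convergence (bound_summable hq0 hq1)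
      (fun k => tendsto_g hq0 hq1 k) ?_
    filter_upwards [eventually_ge_atTop 1] with r hr k
    rw [Real.norm_eq_abs, abs_of_nonneg (g_nonneg hq0 hq1 r k)]
    exact g_le_bound hq0 hq1 hr k
  rw [tsum_T_eq hq0 hq1] at hmain
  have he : (fun r : ℕ => (q ^ (-(r : ℤ))) ^ 2 * geomFisherInfo q (q ^ (-(r : ℤ)))) =
      fun r : ℕ => ∑' k : ℤ, g q r k := funext (reindex hq0 hq1)
  rw [he]
  exact hmain
end

section
/- Let m be a positive integer, let G be a random variable with the Gamma(m,1) distribution, let c > 0, and set ĉ = m·c/G. Then for every ε > 0, P(ĉ ≥ (1+ε)·c) ≤ exp(-m·ε²/C_1), where C_1 = ε²·(1+ε) / (-ε + (1+ε)·log(1+ε)); equivalently, P(G ≤ m/(1+ε)) ≤ exp(-m·[log(1+ε) - ε/(1+ε)]). -/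
open MeasureTheory ProbabilityTheory

set_option maxHeartbeats 1000000

lemma measurable_gammaPDF' (a r : ℝ) : Measurable (gammaPDF a r) :=
  (measurable_gammaPDFReal a r).ennreal_ofReal

lemma measurable_expfun (ε : ℝ) :
    Measurable fun x : ℝ => ENNReal.ofReal (Real.exp (-ε * x)) :=
  ((measurable_id.const_mul (-ε)).exp).ennreal_ofReal

lemma gamma_mgf_aux (m : ℕ) (hm : 0 < m) (ε : ℝ) (hε : 0 < ε) :
    ∫⁻ x, ENNReal.ofReal (Real.exp (-ε * x)) ∂(gammaMeasure m 1) =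
      ENNReal.ofReal ((1 + ε) ^ (-(m : ℝ))) := by
  have h1ε : (0:ℝ) < 1 + ε := by linarith
  have hmpos : (0:ℝ) < m := Nat.cast_pos.mpr hm
  rw [gammaMeasure, lintegral_withDensity_eq_lintegral_mul _
    (measurable_gammaPDF' _ _) (measurable_expfun ε)]
  have hpt : ∀ x : ℝ, (gammaPDF m 1 * fun x => ENNReal.ofReal (Real.exp (-ε * x))) x
      = ENNReal.ofReal ((1 + ε) ^ (-(m : ℝ))) * gammaPDF m (1 + ε) x := by
    intro x
    rcases lt_or_ge x 0 with hx | hx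
    · simp [gammaPDF_of_neg hx]
    · simp only [Pi.mul_apply, gammaPDF_of_nonneg hx]
      rw [← ENNReal.ofReal_mul (by positivity), ← ENNReal.ofReal_mul (by positivity)]
      congr 1
      have hΓ : (0:ℝ) < Real.Gamma m := Real.Gamma_pos_of_pos hmpos
      simp only [Real.one_rpow, Real.rpow_neg h1ε.le, Real.rpow_natCast]
      have hpow : ((1:ℝ)+ε) ^ m ≠ 0 := by positivity
      field_simp
      rw [show Real.exp (-(x * (1 + ε))) = Real.exp (-x) * Real.exp (-(x * ε)) from by
        rw [← Real.exp_add]; ring_nf]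
      ring
  rw [lintegral_congr hpt, lintegral_const_mul _ (measurable_gammaPDF' _ _),
    lintegral_gammaPDF_eq_one hmpos h1ε]
  simp

/-- Upper tail bound: if `G ~ Gamma(m,1)` and `ĉ = m c / G`, then for every `ε > 0`,
`P(ĉ ≥ (1+ε) c) ≤ exp (-m ε² / C₁)` with `C₁ = ε² (1+ε) / (-ε + (1+ε) log (1+ε))`. -/
theorem maxterm_upper_tail_bound {Ω : Type*} [MeasurableSpace Ω]
    (P : Measure Ω) [IsProbabilityMeasure P]
    (m : ℕ) (hm : 0 < m)
    (G : Ω → ℝ) (hGmeas : Measurable G)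
    (hGlaw : Measure.map G P = gammaMeasure m 1)
    (c : ℝ) (hc : 0 < c) (ε : ℝ) (hε : 0 < ε) :
    P {ω | (1 + ε) * c ≤ (m : ℝ) * c / G ω} ≤
      ENNReal.ofReal (Real.exp (-(m : ℝ) * ε ^ 2 /
        (ε ^ 2 * (1 + ε) / (-ε + (1 + ε) * Real.log (1 + ε))))) := by
  have h1ε : (0:ℝ) < 1 + ε := by linarith
  have hmpos : (0:ℝ) < m := Nat.cast_pos.mpr hm
  set a : ℝ := m / (1 + ε) with ha
  have hapos : 0 < a := by positivity
  -- Step 1: the event implies G ≤ a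
  have hsub : {ω | (1 + ε) * c ≤ (m : ℝ) * c / G ω} ⊆ {ω | G ω ≤ a} := by
    intro ω hω
    simp only [Set.mem_setOf_eq] at hω ⊢
    by_contra hGa
    push_neg at hGa
    have hGpos : 0 < G ω := lt_trans hapos hGa
    rw [le_div_iff₀ hGpos] at hω
    have h2 : (m:ℝ) < (1 + ε) * G ω := by
      rw [ha, div_lt_iff₀ h1ε] at hGa; linarith [hGa]
    nlinarith
  refine le_trans (measure_mono hsub) ?_
  have hmap : P {ω | G ω ≤ a} = (gammaMeasure m 1) (Set.Iic a) := by
    rw [← hGlaw, Measure.map_apply hGmeas measurableSet_Iic]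
    rfl
  rw [hmap]
  -- Step 2: Chernoff bound
  have hmarkov : (gammaMeasure m 1) (Set.Iic a) ≤
      ∫⁻ x, ENNReal.ofReal (Real.exp (ε * (a - x))) ∂(gammaMeasure m 1) := by
    have hrw : (gammaMeasure m 1) (Set.Iic a)
        = ∫⁻ x, (Set.Iic a).indicator (fun _ => (1:ENNReal)) x ∂(gammaMeasure m 1) := by
      rw [lintegral_indicator measurableSet_Iic]; simp
    rw [hrw]
    refine lintegral_mono fun x => ?_
    rcases le_or_gt x a with hx | hx
    · rw [Set.indicator_of_mem (Set.mem_Iic.mpr hx)]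
      rw [show (1:ENNReal) = ENNReal.ofReal 1 by simp]
      exact ENNReal.ofReal_le_ofReal (Real.one_le_exp (by nlinarith))
    · rw [Set.indicator_of_notMem (by simpa using hx.not_ge)]
      exact zero_le
  refine le_trans hmarkov ?_
  have hsplit : ∀ x : ℝ, ENNReal.ofReal (Real.exp (ε * (a - x)))
      = ENNReal.ofReal (Real.exp (ε * a)) * ENNReal.ofReal (Real.exp (-ε * x)) := by
    intro x
    rw [← ENNReal.ofReal_mul (Real.exp_nonneg _), ← Real.exp_add]
    ring_nf
  calc ∫⁻ x, ENNReal.ofReal (Real.exp (ε * (a - x))) ∂(gammaMeasure m 1)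
      = ENNReal.ofReal (Real.exp (ε * a)) *
        ∫⁻ x, ENNReal.ofReal (Real.exp (-ε * x)) ∂(gammaMeasure m 1) := by
        rw [← lintegral_const_mul _ (measurable_expfun ε)]
        exact lintegral_congr hsplit
    _ = ENNReal.ofReal (Real.exp (ε * a)) * ENNReal.ofReal ((1 + ε) ^ (-(m : ℝ))) := by
        rw [gamma_mgf_aux m hm ε hε]
    _ ≤ ENNReal.ofReal (Real.exp (-(m : ℝ) * ε ^ 2 /
        (ε ^ 2 * (1 + ε) / (-ε + (1 + ε) * Real.log (1 + ε))))) := by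
        rw [← ENNReal.ofReal_mul (Real.exp_nonneg _)]
        apply ENNReal.ofReal_le_ofReal
        rw [Real.rpow_def_of_pos h1ε, ← Real.exp_add]
        apply le_of_eq
        congr 1
        -- exponent equality
        have hD : 0 < -ε + (1 + ε) * Real.log (1 + ε) := by
          have hlog := Real.log_lt_sub_one_of_pos (x := 1/(1+ε)) (by positivity)
            (by intro h; rw [div_eq_one_iff_eq (by positivity)] at h; linarith)
          rw [Real.log_div one_ne_zero (by positivity), Real.log_one] at hlog
          have h2 : (1:ℝ)/(1+ε) - 1 = -ε/(1+ε) := by field_simp; ring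
          rw [h2] at hlog
          rw [neg_div] at hlog
          have h4 : ε / (1 + ε) < Real.log (1 + ε) := by linarith
          have h5 := (div_lt_iff₀ h1ε).mp h4
          nlinarith [h5]
        have hεne : ε ≠ 0 := ne_of_gt hε
        rw [ha]
        field_simp
        ring
end

section
/- For each α ∈ (0,1), let X_α be a positive strictly α-stable random variable. Then X_α^{-α} converges in distribution to the Exponential(1) distribution as α → 0⁺; equivalently, X_α^{α} converges in distribution to 1/Z where Z ~ Exponential(1). -/
open MeasureTheory ProbabilityTheory Filter BoundedContinuousFunction

/-- `X` is a positive strictly `α`-stable random variable (under `P`): it is a.s. positive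
and its Laplace transform is `E[exp (-λ X)] = exp (-λ^α)` for all `λ ≥ 0`. -/
def IsPositiveStable {Ω : Type*} [MeasurableSpace Ω] (P : Measure Ω)
    (α : ℝ) (X : Ω → ℝ) : Prop :=
  (∀ᵐ ω ∂P, 0 < X ω) ∧
    ∀ l : ℝ, 0 ≤ l → ∫ ω, Real.exp (-(l * X ω)) ∂P = Real.exp (-(l ^ α))

lemma measurable_rpow_const' (c : ℝ) : Measurable (fun y : ℝ => y ^ c) := by measurability

section Aux

open Set

variable {Ω : Type*} [MeasurableSpace Ω]

/-- Laplace transform sandwich bounds for the probability `P(X < t)`. -/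
lemma laplace_sandwich (P : Measure Ω) [IsProbabilityMeasure P] {α : ℝ}
    {X : Ω → ℝ} (hm : Measurable X) (hpos : ∀ᵐ ω ∂P, 0 < X ω)
    (hlap : ∀ l : ℝ, 0 ≤ l → ∫ ω, Real.exp (-(l * X ω)) ∂P = Real.exp (-(l ^ α)))
    {l t : ℝ} (hl : 0 ≤ l) :
    Real.exp (-(l ^ α)) - Real.exp (-(l * t)) ≤ (P {ω | X ω < t}).toReal ∧
      (P {ω | X ω < t}).toReal ≤ Real.exp (l * t) * Real.exp (-(l ^ α)) := by
  have hSm : MeasurableSet {ω | X ω < t} := measurableSet_lt hm measurable_const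
  have hint : Integrable (fun ω => Real.exp (-(l * X ω))) P := by
    refine Integrable.mono' (integrable_const 1) ?_ ?_
    · exact (Real.measurable_exp.comp (measurable_const.mul hm).neg).aestronglyMeasurable
    · filter_upwards [hpos] with ω hω
      rw [Real.norm_eq_abs, abs_of_pos (Real.exp_pos _)]
      exact Real.exp_le_one_iff.mpr (neg_nonpos.mpr (mul_nonneg hl hω.le))
  have hPn : (0:ℝ) ≤ (P {ω | X ω < t}).toReal := ENNReal.toReal_nonneg
  constructor
  · have hmono : ∀ᵐ ω ∂P, Real.exp (-(l * X ω)) ≤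
        Set.indicator {ω | X ω < t} (fun _ => (1:ℝ)) ω + Real.exp (-(l * t)) := by
      filter_upwards [hpos] with ω hω
      by_cases h : ω ∈ {ω | X ω < t}
      · rw [Set.indicator_of_mem h]
        have h1 : Real.exp (-(l * X ω)) ≤ 1 :=
          Real.exp_le_one_iff.mpr (neg_nonpos.mpr (mul_nonneg hl hω.le))
        linarith [Real.exp_pos (-(l * t))]
      · rw [Set.indicator_of_notMem h]
        have h2 : l * t ≤ l * X ω := mul_le_mul_of_nonneg_left (not_lt.mp h) hl
        have h3 := Real.exp_le_exp.mpr (neg_le_neg h2)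
        linarith
    have hind : Integrable (Set.indicator {ω | X ω < t} (fun _ => (1:ℝ))) P :=
      (integrable_const 1).indicator hSm
    have h3 := integral_mono_ae hint (hind.add (integrable_const _)) hmono
    simp only [Pi.add_apply] at h3
    rw [hlap l hl, integral_add hind (integrable_const _), integral_indicator_const _ hSm,
      integral_const] at h3
    simp only [smul_eq_mul, mul_one, measure_univ, ENNReal.toReal_one, one_mul, measureReal_def] at h3
    linarith
  · have hmono : ∀ ω, Set.indicator {ω | X ω < t} (fun _ => Real.exp (-(l * t))) ω ≤
        Real.exp (-(l * X ω)) := by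
      intro ω
      by_cases h : ω ∈ {ω | X ω < t}
      · rw [Set.indicator_of_mem h]
        exact Real.exp_le_exp.mpr (neg_le_neg (mul_le_mul_of_nonneg_left (le_of_lt h) hl))
      · rw [Set.indicator_of_notMem h]
        positivity
    have h3 := integral_mono ((integrable_const _).indicator hSm) hint hmono
    rw [hlap l hl, integral_indicator_const _ hSm] at h3
    have he : Real.exp (-(l * t)) * Real.exp (l * t) = 1 := by
      rw [← Real.exp_add]; simp
    have hep := Real.exp_pos (l * t)
    rw [smul_eq_mul, measureReal_def] at h3
    nlinarith [mul_le_mul_of_nonneg_right h3 hep.le]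


/-- The tail probability `P(X α ^ (-α) > x)` converges to `exp (-x)` as `α → 0⁺`. -/
lemma tail_tendsto (P : Measure Ω) [IsProbabilityMeasure P]
    (X : ℝ → Ω → ℝ)
    (hXmeas : ∀ α ∈ Set.Ioo (0 : ℝ) 1, Measurable (X α))
    (hXstab : ∀ α ∈ Set.Ioo (0 : ℝ) 1, IsPositiveStable P α (X α))
    {x : ℝ} (hx : 0 ≤ x) :
    Tendsto (fun α : ℝ => (P {ω | x < X α ω ^ (-α)}).toReal)
      (nhdsWithin 0 (Set.Ioi 0)) (nhds (Real.exp (-x))) := by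
  have hIoo : Set.Ioo (0:ℝ) 1 ∈ nhdsWithin (0:ℝ) (Set.Ioi 0) :=
    Ioo_mem_nhdsGT_of_mem ⟨le_refl 0, one_pos⟩
  rcases hx.eq_or_lt with hx0 | hx
  · -- case x = 0
    subst hx0
    have heq : ∀ᶠ α in nhdsWithin (0:ℝ) (Set.Ioi 0),
        (1:ℝ) = (P {ω | 0 < X α ω ^ (-α)}).toReal := by
      filter_upwards [hIoo] with α hα
      have h1 : ∀ᵐ ω ∂P, ω ∈ {ω | 0 < X α ω ^ (-α)} := by
        filter_upwards [(hXstab α hα).1] with ω hω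
        exact Real.rpow_pos_of_pos hω _
      have h2 : P {ω | 0 < X α ω ^ (-α)} = P Set.univ := by
        apply measure_congr
        rw [Filter.eventuallyEq_set]
        filter_upwards [h1] with ω hω
        simp [hω]
      rw [h2, measure_univ, ENNReal.toReal_one]
    simp only [neg_zero, Real.exp_zero]
    exact Tendsto.congr' heq tendsto_const_nhds
  · -- case 0 < x
    set L := nhdsWithin (0:ℝ) (Set.Ioi 0) with hL
    have hsq : Tendsto (fun α : ℝ => Real.sqrt α) L (nhds 0) :=
      (Real.continuous_sqrt.tendsto' 0 0 Real.sqrt_zero).mono_left nhdsWithin_le_nhds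
    have hsq' : Tendsto (fun α : ℝ => Real.sqrt α) L (nhdsWithin 0 (Set.Ioi 0)) := by
      rw [tendsto_nhdsWithin_iff]
      refine ⟨hsq, ?_⟩
      filter_upwards [self_mem_nhdsWithin] with α (hα : α ∈ Set.Ioi (0:ℝ))
      exact Real.sqrt_pos.mpr hα
    have hinv : Tendsto (fun α : ℝ => (Real.sqrt α)⁻¹) L atTop :=
      tendsto_inv_nhdsGT_zero.comp hsq'
    -- limit of the upper bound
    have hub : Tendsto (fun α : ℝ =>
        Real.exp (Real.exp (-(Real.sqrt α)⁻¹)) * Real.exp (-(Real.exp (-Real.sqrt α) * x)))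
        L (nhds (Real.exp (-x))) := by
      have hA : Tendsto (fun α : ℝ => -(Real.sqrt α)⁻¹) L atBot :=
        tendsto_neg_atTop_atBot.comp hinv
      have hB : Tendsto (fun α : ℝ => Real.exp (-(Real.sqrt α)⁻¹)) L (nhds 0) :=
        Real.tendsto_exp_atBot.comp hA
      have hC : Tendsto (fun α : ℝ => Real.exp (Real.exp (-(Real.sqrt α)⁻¹))) L (nhds 1) := by
        have := (Real.continuous_exp.tendsto 0).comp hB
        simpa [Function.comp_def] using this
      have hD : Tendsto (fun α : ℝ => Real.exp (-(Real.exp (-Real.sqrt α) * x))) L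
          (nhds (Real.exp (-x))) := by
        have h1 : Tendsto (fun α : ℝ => Real.exp (-Real.sqrt α)) L (nhds 1) := by
          have := (Real.continuous_exp.tendsto (-0)).comp hsq.neg
          simpa [Function.comp_def] using this
        have h2 : Tendsto (fun α : ℝ => -(Real.exp (-Real.sqrt α) * x)) L (nhds (-(1 * x))) :=
          (h1.mul tendsto_const_nhds).neg
        have := (Real.continuous_exp.tendsto _).comp h2
        simpa [Function.comp_def] using this
      have := hC.mul hD
      simpa using this
    -- limit of the lower bound
    have hlb : Tendsto (fun α : ℝ =>
        Real.exp (-(Real.exp (Real.sqrt α) * x)) - Real.exp (-(Real.exp ((Real.sqrt α)⁻¹))))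
        L (nhds (Real.exp (-x))) := by
      have h1 : Tendsto (fun α : ℝ => Real.exp (-(Real.exp (Real.sqrt α) * x))) L
          (nhds (Real.exp (-x))) := by
        have ha : Tendsto (fun α : ℝ => Real.exp (Real.sqrt α)) L (nhds 1) := by
          have := (Real.continuous_exp.tendsto 0).comp hsq
          simpa [Function.comp_def] using this
        have h2 : Tendsto (fun α : ℝ => -(Real.exp (Real.sqrt α) * x)) L (nhds (-(1 * x))) :=
          (ha.mul tendsto_const_nhds).neg
        have := (Real.continuous_exp.tendsto _).comp h2
        simpa [Function.comp_def] using this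
      have h2 : Tendsto (fun α : ℝ => Real.exp (-(Real.exp ((Real.sqrt α)⁻¹)))) L (nhds 0) := by
        have ha : Tendsto (fun α : ℝ => Real.exp ((Real.sqrt α)⁻¹)) L atTop :=
          Real.tendsto_exp_atTop.comp hinv
        exact Real.tendsto_exp_atBot.comp (tendsto_neg_atTop_atBot.comp ha)
      have := h1.sub h2
      simpa using this
    -- the sandwich bounds, eventually
    have hbound : ∀ᶠ α in L,
        (Real.exp (-(Real.exp (Real.sqrt α) * x)) - Real.exp (-(Real.exp ((Real.sqrt α)⁻¹)))
          ≤ (P {ω | x < X α ω ^ (-α)}).toReal) ∧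
        ((P {ω | x < X α ω ^ (-α)}).toReal ≤
          Real.exp (Real.exp (-(Real.sqrt α)⁻¹)) * Real.exp (-(Real.exp (-Real.sqrt α) * x))) := by
      filter_upwards [hIoo] with α hα
      obtain ⟨hα0, hα1⟩ := hα
      have hs : 0 < Real.sqrt α := Real.sqrt_pos.mpr hα0
      have hss : Real.sqrt α * Real.sqrt α = α := Real.mul_self_sqrt hα0.le
      set s := Real.sqrt α with hsdef
      set t : ℝ := x ^ (-α)⁻¹ with ht_def
      have ht : 0 < t := Real.rpow_pos_of_pos hx _
      have hev : P {ω | x < X α ω ^ (-α)} = P {ω | X α ω < t} := by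
        apply measure_congr
        rw [Filter.eventuallyEq_set]
        filter_upwards [(hXstab α ⟨hα0, hα1⟩).1] with ω hω
        exact (Real.lt_rpow_inv_iff_of_neg hω hx (neg_lt_zero.mpr hα0)).symm
      have key : ∀ u : ℝ, (Real.exp u * x ^ α⁻¹) * t = Real.exp u ∧
          (Real.exp u * x ^ α⁻¹) ^ α = Real.exp (u * α) * x := by
        intro u
        constructor
        · rw [ht_def, inv_neg, mul_assoc, ← Real.rpow_add hx, add_neg_cancel, Real.rpow_zero,
            mul_one]
        · rw [Real.mul_rpow (Real.exp_pos u).le (Real.rpow_nonneg hx.le _),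
            Real.rpow_def_of_pos (Real.exp_pos u), Real.log_exp,
            Real.rpow_inv_rpow hx.le hα0.ne']
      have hu1 : s⁻¹ * α = s := by
        field_simp [← hss]
        rw [sq, hss]
      have hu2 : (-s⁻¹) * α = -s := by rw [neg_mul, hu1]
      constructor
      · have h := (laplace_sandwich P (hXmeas α ⟨hα0, hα1⟩) (hXstab α ⟨hα0, hα1⟩).1
          (hXstab α ⟨hα0, hα1⟩).2 (l := Real.exp s⁻¹ * x ^ α⁻¹) (t := t) (by positivity)).1
        rw [(key s⁻¹).1, (key s⁻¹).2, hu1] at h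
        rw [hev]
        exact h
      · have h := (laplace_sandwich P (hXmeas α ⟨hα0, hα1⟩) (hXstab α ⟨hα0, hα1⟩).1
          (hXstab α ⟨hα0, hα1⟩).2 (l := Real.exp (-s⁻¹) * x ^ α⁻¹) (t := t) (by positivity)).2
        rw [(key (-s⁻¹)).1, (key (-s⁻¹)).2, hu2] at h
        rw [hev]
        exact h
    exact tendsto_of_tendsto_of_tendsto_of_le_of_le' hlb hub
      (hbound.mono fun α h => h.1) (hbound.mono fun α h => h.2)



/-- Step-function approximation of the integral of a bounded continuous function against a
probability measure supported on `(0, ∞)`, in terms of its tail function. -/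
lemma approx_sum (ρ : Measure ℝ) [IsProbabilityMeasure ρ] (hρ0 : ρ (Set.Iic 0) = 0)
    (f : ℝ →ᵇ ℝ) {δ : ℝ} (hδ : 0 ≤ δ) {k : ℕ} (x : ℕ → ℝ) (hx0 : x 0 = 0)
    (hosc : ∀ i, i < k → ∀ y ∈ Set.Ioc (x i) (x (i + 1)), |f y - f (x i)| ≤ δ)
    (hmono : ∀ i, i < k → x i ≤ x (i + 1)) :
    |(∫ y, f y ∂ρ) -
        ∑ i ∈ Finset.range k, f (x i) *
          ((ρ (Set.Ioi (x i))).toReal - (ρ (Set.Ioi (x (i + 1)))).toReal)|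
      ≤ δ + ‖f‖ * (ρ (Set.Ioi (x k))).toReal := by
  have hint : Integrable (⇑f) ρ := f.integrable ρ
  set R : ℝ → ℝ := fun y => (ρ (Set.Ioi y)).toReal with hR
  set J : ℝ → ℝ := fun y => ∫ z in Set.Ioi y, f z ∂ρ with hJ
  have hJsplit : ∀ a b : ℝ, a ≤ b → J a - J b = ∫ z in Set.Ioc a b, f z ∂ρ := by
    intro a b hab
    have h := setIntegral_union (Set.Ioc_disjoint_Ioi_same) measurableSet_Ioi
      (hint.integrableOn (s := Set.Ioc a b)) (hint.integrableOn (s := Set.Ioi b))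
    rw [Set.Ioc_union_Ioi_eq_Ioi hab] at h
    simp only [hJ]
    rw [h]; ring
  have hRsplit : ∀ a b : ℝ, a ≤ b → R a - R b = (ρ (Set.Ioc a b)).toReal := by
    intro a b hab
    have h := measure_union (μ := ρ) (Set.Ioc_disjoint_Ioi_same (a := a) (b := b))
      (measurableSet_Ioi (a := b))
    rw [Set.Ioc_union_Ioi_eq_Ioi hab] at h
    simp only [hR]
    rw [h, ENNReal.toReal_add (measure_ne_top _ _) (measure_ne_top _ _)]
    ring
  have hterm : ∀ i, i < k →
      |J (x i) - J (x (i + 1)) - f (x i) * (R (x i) - R (x (i + 1)))|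
        ≤ δ * (R (x i) - R (x (i + 1))) := by
    intro i hi
    rw [hJsplit _ _ (hmono i hi), hRsplit _ _ (hmono i hi)]
    have heq : (∫ z in Set.Ioc (x i) (x (i + 1)), f z ∂ρ)
          - f (x i) * (ρ (Set.Ioc (x i) (x (i + 1)))).toReal
        = ∫ z in Set.Ioc (x i) (x (i + 1)), (f z - f (x i)) ∂ρ := by
      rw [integral_sub (hint.integrableOn)
        (integrableOn_const (measure_ne_top _ _)),
        setIntegral_const, smul_eq_mul, measureReal_def]
      ring
    rw [heq]
    have h := norm_setIntegral_le_of_norm_le_const_ae' (μ := ρ)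
      (s := Set.Ioc (x i) (x (i + 1))) (f := fun z => f z - f (x i)) (C := δ) (measure_lt_top _ _)
      (Filter.Eventually.of_forall (fun y hy => by
        rw [Real.norm_eq_abs]; exact hosc i hi y hy))
    rwa [Real.norm_eq_abs, measureReal_def] at h
  have hzero : ∫ z in Set.Iic (0:ℝ), f z ∂ρ = 0 := by
    rw [Measure.restrict_eq_zero.mpr hρ0, integral_zero_measure]
  have hJ0 : ∫ y, f y ∂ρ = J (x 0) := by
    have h := integral_add_compl (measurableSet_Iic (a := (0:ℝ))) hint
    rw [compl_Iic, hzero, zero_add] at h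
    rw [hx0]
    exact h.symm
  have htel1 : ∑ i ∈ Finset.range k, (J (x i) - J (x (i + 1))) = J (x 0) - J (x k) :=
    Finset.sum_range_sub' (fun i => J (x i)) k
  have htel2 : ∑ i ∈ Finset.range k, (R (x i) - R (x (i + 1))) = R (x 0) - R (x k) :=
    Finset.sum_range_sub' (fun i => R (x i)) k
  show |(∫ y, f y ∂ρ) - ∑ i ∈ Finset.range k, f (x i) * (R (x i) - R (x (i + 1)))|
      ≤ δ + ‖f‖ * R (x k)
  have hdecomp : (∫ y, f y ∂ρ) - ∑ i ∈ Finset.range k, f (x i) * (R (x i) - R (x (i + 1)))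
      = (∑ i ∈ Finset.range k,
          (J (x i) - J (x (i + 1)) - f (x i) * (R (x i) - R (x (i + 1))))) + J (x k) := by
    rw [Finset.sum_sub_distrib, htel1, hJ0]
    ring
  rw [hdecomp]
  have hJk : |J (x k)| ≤ ‖f‖ * R (x k) := by
    have h := norm_setIntegral_le_of_norm_le_const_ae' (μ := ρ) (s := Set.Ioi (x k))
      (measure_lt_top _ _)
      (Filter.Eventually.of_forall (fun y _ => f.norm_coe_le_norm y))
    rwa [Real.norm_eq_abs, measureReal_def] at h
  have hsum : |∑ i ∈ Finset.range k,
      (J (x i) - J (x (i + 1)) - f (x i) * (R (x i) - R (x (i + 1))))|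
      ≤ δ * (R (x 0) - R (x k)) := by
    calc |∑ i ∈ Finset.range k,
        (J (x i) - J (x (i + 1)) - f (x i) * (R (x i) - R (x (i + 1))))|
        ≤ ∑ i ∈ Finset.range k,
          |J (x i) - J (x (i + 1)) - f (x i) * (R (x i) - R (x (i + 1)))| :=
        Finset.abs_sum_le_sum_abs _ _
      _ ≤ ∑ i ∈ Finset.range k, δ * (R (x i) - R (x (i + 1))) :=
        Finset.sum_le_sum (fun i hi => hterm i (Finset.mem_range.mp hi))
      _ = δ * (R (x 0) - R (x k)) := by rw [← Finset.mul_sum, htel2]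
  have hR0 : R (x 0) ≤ 1 :=
    ENNReal.toReal_le_of_le_ofReal zero_le_one (by simpa using prob_le_one)
  have hRk : 0 ≤ R (x k) := ENNReal.toReal_nonneg
  have hfn : 0 ≤ ‖f‖ := norm_nonneg f
  calc |(∑ i ∈ Finset.range k,
        (J (x i) - J (x (i + 1)) - f (x i) * (R (x i) - R (x (i + 1))))) + J (x k)|
      ≤ |∑ i ∈ Finset.range k,
        (J (x i) - J (x (i + 1)) - f (x i) * (R (x i) - R (x (i + 1))))| + |J (x k)| :=
      abs_add_le _ _
    _ ≤ δ * (R (x 0) - R (x k)) + ‖f‖ * R (x k) := add_le_add hsum hJk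
    _ ≤ δ + ‖f‖ * R (x k) := by nlinarith


end Aux

/-- If, for each `α ∈ (0,1)`, `X α` is a positive strictly `α`-stable random variable, then
`(X α)^(-α)` converges in distribution to the `Exponential(1)` distribution as `α → 0⁺`. -/
theorem stable_neg_power_tendsto_exponential {Ω : Type*} [MeasurableSpace Ω]
    (P : Measure Ω) [IsProbabilityMeasure P]
    (X : ℝ → Ω → ℝ)
    (hXmeas : ∀ α ∈ Set.Ioo (0 : ℝ) 1, Measurable (X α))
    (hXstab : ∀ α ∈ Set.Ioo (0 : ℝ) 1, IsPositiveStable P α (X α)) :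
    ∀ f : ℝ →ᵇ ℝ,
      Tendsto (fun α : ℝ => ∫ ω, f (X α ω ^ (-α)) ∂P)
        (nhdsWithin 0 (Set.Ioi 0)) (nhds (∫ x, f x ∂(expMeasure 1))) := by
  intro f
  haveI : IsProbabilityMeasure (expMeasure 1) := isProbabilityMeasure_expMeasure one_pos
  set L := nhdsWithin (0:ℝ) (Set.Ioi 0) with hLdef
  have hIoo : Set.Ioo (0:ℝ) 1 ∈ L := Ioo_mem_nhdsGT_of_mem ⟨le_refl 0, one_pos⟩
  -- tails of the exponential measure
  have hν_tail : ∀ y : ℝ, 0 ≤ y → (expMeasure 1 (Set.Ioi y)).toReal = Real.exp (-y) := by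
    intro y hy
    have h1 : expMeasure 1 (Set.Iic y) = ENNReal.ofReal (1 - Real.exp (-y)) := by
      rw [← ofReal_cdf]
      congr 1
      have h := cdf_expMeasure_eq one_pos y
      rw [h, if_pos hy, one_mul]
    have h2 : expMeasure 1 (Set.Ioi y) = 1 - expMeasure 1 (Set.Iic y) := by
      rw [← Set.compl_Iic, measure_compl measurableSet_Iic (measure_ne_top _ _), measure_univ]
    have hexp1 : Real.exp (-y) ≤ 1 := Real.exp_le_one_iff.mpr (by linarith)
    rw [h2, h1, ENNReal.toReal_sub_of_le
      (by exact ENNReal.ofReal_le_one.mpr (by linarith [Real.exp_pos (-y)])) ENNReal.one_ne_top,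
      ENNReal.toReal_one, ENNReal.toReal_ofReal (by linarith)]
    ring
  have hν0 : expMeasure 1 (Set.Iic 0) = 0 := by
    rw [← ofReal_cdf]
    have h := cdf_expMeasure_eq one_pos 0
    rw [h]
    simp
  rw [Metric.tendsto_nhds]
  intro ε hε
  set C := ‖f‖ with hCdef
  have hC0 : (0:ℝ) ≤ C := norm_nonneg f
  set δ := ε / (4 * (C + 1)) with hδdef
  have hδ : 0 < δ := by positivity
  set M := max 1 (-Real.log δ) with hMdef
  have hM0 : (0:ℝ) < M := lt_of_lt_of_le one_pos (le_max_left _ _)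
  have hMδ : Real.exp (-M) ≤ δ := by
    have h1 : -M ≤ Real.log δ := by
      have := le_max_right 1 (-Real.log δ)
      simp only [hMdef] at *
      linarith
    calc Real.exp (-M) ≤ Real.exp (Real.log δ) := Real.exp_le_exp.mpr h1
      _ = δ := Real.exp_log hδ
  -- uniform continuity on [0, M] and the grid
  have hu := (isCompact_Icc (a := (0:ℝ)) (b := M)).uniformContinuousOn_of_continuous
    f.continuous.continuousOn
  rw [Metric.uniformContinuousOn_iff] at hu
  obtain ⟨η, hη, hηf⟩ := hu δ hδ
  set k := ⌈M / η⌉₊ + 1 with hkdef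
  have hk0 : (0:ℝ) < (k:ℝ) := by positivity
  have hkη : M / k < η := by
    rw [div_lt_iff₀ hk0]
    have h1 : M / η < (k:ℝ) := by
      have h2 : M / η ≤ (⌈M / η⌉₊ : ℝ) := Nat.le_ceil _
      have h3 : ((⌈M / η⌉₊ : ℝ)) < (k:ℝ) := by
        rw [hkdef]; push_cast; linarith
      linarith
    calc M = (M / η) * η := by field_simp
      _ < (k:ℝ) * η := mul_lt_mul_of_pos_right h1 hη
      _ = η * (k:ℝ) := mul_comm _ _
  set x : ℕ → ℝ := fun i => (i : ℝ) * (M / k) with hxdef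
  have hx0 : x 0 = 0 := by simp [hxdef]
  have hxk : x k = M := by
    simp only [hxdef]
    field_simp
  have hxmono : ∀ i j : ℕ, i ≤ j → x i ≤ x j := by
    intro i j h
    simp only [hxdef]
    apply mul_le_mul_of_nonneg_right (by exact_mod_cast h)
    positivity
  have hstep : ∀ i : ℕ, x (i+1) - x i = M / k := by
    intro i
    simp only [hxdef]
    push_cast
    ring
  have hxnn : ∀ i : ℕ, 0 ≤ x i := by
    intro i
    simp only [hxdef]
    positivity
  have hosc : ∀ i, i < k → ∀ y ∈ Set.Ioc (x i) (x (i + 1)), |f y - f (x i)| ≤ δ := by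
    intro i hi y hy
    have hyk : x (i+1) ≤ M := by rw [← hxk]; exact hxmono (i+1) k hi
    have hyIcc : y ∈ Set.Icc (0:ℝ) M := ⟨le_trans (hxnn i) hy.1.le, le_trans hy.2 hyk⟩
    have hxi : x i ∈ Set.Icc (0:ℝ) M := ⟨hxnn i, le_trans (hxmono i (i+1) (Nat.le_succ i)) hyk⟩
    have hd : dist y (x i) < η := by
      rw [Real.dist_eq, abs_of_nonneg (by linarith [hy.1.le])]
      have h2 := hy.2
      have h3 := hstep i
      linarith
    have := hηf y hyIcc (x i) hxi hd
    rw [Real.dist_eq] at this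
    exact this.le
  -- convergence of the Riemann sums
  set S : ℝ := ∑ i ∈ Finset.range k,
    f (x i) * (Real.exp (-(x i)) - Real.exp (-(x (i+1)))) with hSdef
  have hT : ∀ i : ℕ, Tendsto (fun α : ℝ => (P {ω | x i < X α ω ^ (-α)}).toReal) L
      (nhds (Real.exp (-(x i)))) := fun i => tail_tendsto P X hXmeas hXstab (hxnn i)
  have hSum : Tendsto (fun α : ℝ => ∑ i ∈ Finset.range k,
      f (x i) * ((P {ω | x i < X α ω ^ (-α)}).toReal
        - (P {ω | x (i+1) < X α ω ^ (-α)}).toReal)) L (nhds S) := by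
    apply tendsto_finset_sum
    intro i _
    exact tendsto_const_nhds.mul ((hT i).sub (hT (i+1)))
  have hev1 : ∀ᶠ α in L, |(∑ i ∈ Finset.range k,
      f (x i) * ((P {ω | x i < X α ω ^ (-α)}).toReal
        - (P {ω | x (i+1) < X α ω ^ (-α)}).toReal)) - S| < δ := by
    have h := Metric.tendsto_nhds.mp hSum δ hδ
    filter_upwards [h] with α hα
    rwa [Real.dist_eq] at hα
  have hev2 : ∀ᶠ α in L, (P {ω | M < X α ω ^ (-α)}).toReal < 2*δ := by
    have hM' := tail_tendsto P X hXmeas hXstab hM0.le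
    have h := Metric.tendsto_nhds.mp hM' δ hδ
    filter_upwards [h] with α hα
    rw [Real.dist_eq, abs_lt] at hα
    linarith [hα.2]
  -- the ν-side estimate
  have hνax : |(∫ y, f y ∂(expMeasure 1)) - S| ≤ δ + C * δ := by
    have h := approx_sum (expMeasure 1) hν0 f hδ.le x hx0 hosc
      (fun i _ => hxmono i (i+1) (Nat.le_succ i))
    have hsum_eq : ∑ i ∈ Finset.range k, f (x i) *
        ((expMeasure 1 (Set.Ioi (x i))).toReal - (expMeasure 1 (Set.Ioi (x (i+1)))).toReal)
        = S := by
      apply Finset.sum_congr rfl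
      intro i _
      rw [hν_tail _ (hxnn i), hν_tail _ (hxnn (i+1))]
    rw [hsum_eq, hxk, hν_tail M hM0.le] at h
    calc |(∫ y, f y ∂(expMeasure 1)) - S| ≤ δ + C * Real.exp (-M) := h
      _ ≤ δ + C * δ := by nlinarith
  -- the α-side estimate
  have hev3 : ∀ᶠ α in L, |(∫ ω, f (X α ω ^ (-α)) ∂P) - ∑ i ∈ Finset.range k,
      f (x i) * ((P {ω | x i < X α ω ^ (-α)}).toReal
        - (P {ω | x (i+1) < X α ω ^ (-α)}).toReal)|
      ≤ δ + C * (P {ω | M < X α ω ^ (-α)}).toReal := by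
    filter_upwards [hIoo] with α hα
    have hXm := hXmeas α hα
    have hYm : Measurable (fun ω => X α ω ^ (-α)) :=
      (measurable_rpow_const' (-α)).comp hXm
    haveI := Measure.isProbabilityMeasure_map (μ := P) hYm.aemeasurable
    have hmap : ∀ y : ℝ, (P.map (fun ω => X α ω ^ (-α))) (Set.Ioi y)
        = P {ω | y < X α ω ^ (-α)} := by
      intro y
      rw [Measure.map_apply hYm measurableSet_Ioi]
      rfl
    have hρ0 : (P.map (fun ω => X α ω ^ (-α))) (Set.Iic 0) = 0 := by
      rw [Measure.map_apply hYm measurableSet_Iic]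
      have h1 : ∀ᵐ ω ∂P, 0 < X α ω ^ (-α) := by
        filter_upwards [(hXstab α hα).1] with ω hω
        exact Real.rpow_pos_of_pos hω _
      have h2 := ae_iff.mp h1
      convert h2 using 2
      ext ω
      simp [not_lt]
    have hInt : ∫ y, f y ∂(P.map (fun ω => X α ω ^ (-α))) = ∫ ω, f (X α ω ^ (-α)) ∂P := by
      rw [integral_map hYm.aemeasurable f.continuous.measurable.aestronglyMeasurable]
    have h := approx_sum (P.map (fun ω => X α ω ^ (-α))) hρ0 f hδ.le x hx0 hosc
      (fun i _ => hxmono i (i+1) (Nat.le_succ i))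
    have hsum_eq : ∑ i ∈ Finset.range k, f (x i) *
        (((P.map (fun ω => X α ω ^ (-α))) (Set.Ioi (x i))).toReal
          - ((P.map (fun ω => X α ω ^ (-α))) (Set.Ioi (x (i+1)))).toReal)
        = ∑ i ∈ Finset.range k, f (x i) *
          ((P {ω | x i < X α ω ^ (-α)}).toReal - (P {ω | x (i+1) < X α ω ^ (-α)}).toReal) := by
      apply Finset.sum_congr rfl
      intro i _
      rw [hmap, hmap]
    rw [hInt, hsum_eq, hxk, hmap] at h
    exact h
  -- combine everything
  filter_upwards [hev1, hev2, hev3] with α h1 h2 h3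
  rw [Real.dist_eq]
  set a := ∫ ω, f (X α ω ^ (-α)) ∂P
  set b := ∑ i ∈ Finset.range k,
      f (x i) * ((P {ω | x i < X α ω ^ (-α)}).toReal
        - (P {ω | x (i+1) < X α ω ^ (-α)}).toReal)
  set d := ∫ y, f y ∂(expMeasure 1)
  have habs : |a - d| ≤ |a - b| + |b - S| + |d - S| := by
    have t1 : |a - d| ≤ |a - b| + |b - d| := abs_sub_le a b d
    have t2 : |b - d| ≤ |b - S| + |S - d| := abs_sub_le b S d
    have t3 : |S - d| = |d - S| := abs_sub_comm S d
    linarith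
  have hCb : C * (P {ω | M < X α ω ^ (-α)}).toReal ≤ C * (2*δ) :=
    mul_le_mul_of_nonneg_left h2.le hC0
  have hδε : δ * (4 * (C + 1)) = ε := by
    rw [hδdef]
    field_simp
  calc |a - d| ≤ |a - b| + |b - S| + |d - S| := habs
    _ < (δ + C * (2*δ)) + δ + (δ + C * δ) := by
        have := h3
        have := hνax
        linarith
    _ ≤ ε := by nlinarith
end

section
/- For each α ∈ (0,1), let X_α be a positive strictly α-stable random variable and let G_α(y) = P(X_α^α ≤ y) be the cumulative distribution function of X_α^α. Then G_α converges to the function y ↦ exp(-1/y) uniformly on (0,∞) as α → 0⁺, i.e., sup_{y>0} |G_α(y) - exp(-1/y)| → 0 as α → 0⁺. -/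
open MeasureTheory ProbabilityTheory Filter

private lemma exp_diff_le {a b y : ℝ} (ha : 0 < a) (hab : a ≤ b) (hy : 0 < y) :
    Real.exp (-(a / y)) - Real.exp (-(b / y)) ≤ (b - a) / a := by
  have h1 : Real.exp (-(b / y)) = Real.exp (-(a / y)) * Real.exp (-((b - a) / y)) := by
    rw [← Real.exp_add]; ring_nf
  have key : 1 - Real.exp (-((b - a) / y)) ≤ (b - a) / y := by
    have := Real.add_one_le_exp (-((b - a) / y)); linarith
  have h2 : Real.exp (-(a / y)) - Real.exp (-(b / y))
      ≤ Real.exp (-(a / y)) * ((b - a) / y) := by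
    rw [h1]
    nlinarith [Real.exp_pos (-(a / y))]
  have h3 : (a / y) * Real.exp (-(a / y)) ≤ 1 := by
    rw [Real.exp_neg]
    rw [mul_inv_le_iff₀ (Real.exp_pos _), one_mul]
    have := Real.add_one_le_exp (a / y); linarith
  have h4 : Real.exp (-(a / y)) * ((b - a) / y)
      = ((b - a) / a) * ((a / y) * Real.exp (-(a / y))) := by
    field_simp
  have h5 : ((b - a) / a) * ((a / y) * Real.exp (-(a / y))) ≤ ((b - a) / a) * 1 :=
    mul_le_mul_of_nonneg_left h3 (div_nonneg (by linarith) ha.le)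
  calc Real.exp (-(a / y)) - Real.exp (-(b / y))
      ≤ Real.exp (-(a / y)) * ((b - a) / y) := h2
    _ = ((b - a) / a) * ((a / y) * Real.exp (-(a / y))) := h4
    _ ≤ ((b - a) / a) * 1 := h5
    _ = (b - a) / a := mul_one _

private lemma sandwich {Ω : Type*} [MeasurableSpace Ω] (P : Measure Ω)
    [IsProbabilityMeasure P] {α : ℝ} (hα : α ∈ Set.Ioo (0 : ℝ) 1) {X : Ω → ℝ}
    (hXm : Measurable X) (hX : IsPositiveStable P α X) {y s : ℝ}
    (hy : 0 < y) (hs : 0 < s) :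
    Real.exp (-(s / y)) - Real.exp (-(s ^ α⁻¹)) ≤ (P {ω | X ω ^ α ≤ y}).toReal ∧
      (P {ω | X ω ^ α ≤ y}).toReal ≤ Real.exp (s ^ α⁻¹) * Real.exp (-(s / y)) := by
  obtain ⟨hpos, hlap⟩ := hX
  have hαpos : 0 < α := hα.1
  have hsy : 0 < s / y := div_pos hs hy
  set l : ℝ := (s / y) ^ α⁻¹ with hl
  have hl0 : 0 ≤ l := Real.rpow_nonneg hsy.le _
  set m : ℝ := y ^ α⁻¹ with hm
  have hlα : l ^ α = s / y := by
    rw [hl, ← Real.rpow_mul hsy.le, inv_mul_cancel₀ hαpos.ne', Real.rpow_one]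
  have hlm : l * m = s ^ α⁻¹ := by
    rw [hl, hm, ← Real.mul_rpow hsy.le hy.le, div_mul_cancel₀ _ hy.ne']
  set B : Set Ω := {ω | X ω ≤ m} with hBdef
  have hB : MeasurableSet B := hXm measurableSet_Iic
  have hPB : P {ω | X ω ^ α ≤ y} = P B := by
    apply measure_congr
    rw [Filter.eventuallyEq_set]
    filter_upwards [hpos] with ω hω
    simp only [Set.mem_setOf_eq, hBdef, hm]
    exact (Real.le_rpow_inv_iff_of_pos hω.le hy.le hαpos).symm
  have hInt : Integrable (fun ω => Real.exp (-(l * X ω))) P := by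
    apply Integrable.mono' (integrable_const (1 : ℝ))
    · exact (Real.measurable_exp.comp ((hXm.const_mul l).neg)).aestronglyMeasurable
    · filter_upwards [hpos] with ω hω
      rw [Real.norm_eq_abs, abs_of_pos (Real.exp_pos _)]
      exact Real.exp_le_one_iff.2 (by nlinarith)
  -- lower integral bound: exp(-(l*m)) * P(B) ≤ ∫ exp(-(l X))
  have key_ge : (P B).toReal * Real.exp (-(l * m)) ≤ Real.exp (-(l ^ α)) := by
    rw [← hlap l hl0, ← smul_eq_mul, ← measureReal_def, ← integral_indicator_const (Real.exp (-(l * m))) hB]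
    apply integral_mono_ae ((integrable_const _).indicator hB) hInt
    filter_upwards [] with ω
    by_cases hω : ω ∈ B
    · rw [Set.indicator_of_mem hω]
      exact Real.exp_le_exp.2 (by have : X ω ≤ m := hω; nlinarith)
    · rw [Set.indicator_of_notMem hω]
      exact (Real.exp_pos _).le
  -- upper integral bound: ∫ exp(-(l X)) ≤ P(B) + exp(-(l*m))
  have key_le : Real.exp (-(l ^ α)) ≤ (P B).toReal + Real.exp (-(l * m)) := by
    rw [← hlap l hl0]
    have hle : ∀ᵐ ω ∂P, Real.exp (-(l * X ω))
        ≤ B.indicator (fun _ => (1 : ℝ)) ω + Real.exp (-(l * m)) := by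
      filter_upwards [hpos] with ω hω
      by_cases hωB : ω ∈ B
      · rw [Set.indicator_of_mem hωB]
        have h1 : Real.exp (-(l * X ω)) ≤ 1 := Real.exp_le_one_iff.2 (by nlinarith)
        have := (Real.exp_pos (-(l * m))).le
        linarith
      · rw [Set.indicator_of_notMem hωB]
        have hXω : m < X ω := lt_of_not_ge hωB
        have := Real.exp_le_exp.2 (show -(l * X ω) ≤ -(l * m) by nlinarith)
        linarith
    calc ∫ ω, Real.exp (-(l * X ω)) ∂P
        ≤ ∫ ω, (B.indicator (fun _ => (1 : ℝ)) ω + Real.exp (-(l * m))) ∂P :=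
          integral_mono_ae hInt
            (((integrable_const _).indicator hB).add (integrable_const _)) hle
      _ = (P B).toReal + Real.exp (-(l * m)) := by
          rw [integral_add ((integrable_const _).indicator hB) (integrable_const _),
            integral_indicator_const _ hB, integral_const]
          simp [measure_univ, measureReal_def]
  rw [hlα, hlm] at key_ge key_le
  rw [hPB]
  constructor
  · linarith
  · have hE : Real.exp (s ^ α⁻¹) * Real.exp (-(s ^ α⁻¹)) = 1 := by
      rw [← Real.exp_add]; simp
    have := mul_le_mul_of_nonneg_left key_ge (Real.exp_pos (s ^ α⁻¹)).le
    calc (P B).toReal = Real.exp (s ^ α⁻¹) * ((P B).toReal * Real.exp (-(s ^ α⁻¹))) := by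
          rw [mul_comm ((P B).toReal), ← mul_assoc, hE, one_mul]
      _ ≤ Real.exp (s ^ α⁻¹) * Real.exp (-(s / y)) := this
    
/-- If, for each `α ∈ (0,1)`, `X α` is positive strictly `α`-stable with
`G_α(y) = P((X α)^α ≤ y)`, then `G_α` converges to `y ↦ exp (-1/y)` uniformly on `(0,∞)`
as `α → 0⁺`. -/
theorem stable_power_cdf_tendsto_uniformly {Ω : Type*} [MeasurableSpace Ω]
    (P : Measure Ω) [IsProbabilityMeasure P]
    (X : ℝ → Ω → ℝ)
    (hXmeas : ∀ α ∈ Set.Ioo (0 : ℝ) 1, Measurable (X α))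
    (hXstab : ∀ α ∈ Set.Ioo (0 : ℝ) 1, IsPositiveStable P α (X α)) :
    TendstoUniformlyOn
      (fun (α : ℝ) (y : ℝ) => (P {ω | X α ω ^ α ≤ y}).toReal)
      (fun y : ℝ => Real.exp (-1 / y))
      (nhdsWithin 0 (Set.Ioi 0)) (Set.Ioi 0) := by
  rw [Metric.tendstoUniformlyOn_iff]
  intro ε hε
  set s : ℝ := max (1 / 2) (1 - ε / 8) with hsdef
  have hs0 : 0 < s := lt_of_lt_of_le (by norm_num) (le_max_left _ _)
  have hs1 : s < 1 := max_lt (by norm_num) (by linarith)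
  have hshalf : (1 / 2 : ℝ) ≤ s := le_max_left _ _
  have hsub : 1 - s ≤ ε / 8 := by
    have := le_max_right (1 / 2 : ℝ) (1 - ε / 8); linarith
  have hsfrac : (1 - s) / s ≤ ε / 4 := by
    calc (1 - s) / s ≤ (ε / 8) / (1 / 2) :=
          div_le_div₀ (by linarith) hsub (by norm_num) hshalf
      _ = ε / 4 := by ring
  set t : ℝ := 1 + ε / 4 with htdef
  have ht1 : 1 < t := by simp [htdef]; linarith
  -- eventual smallness conditions
  have hA : Tendsto (fun α : ℝ => s ^ α⁻¹) (nhdsWithin 0 (Set.Ioi 0)) (nhds 0) :=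
    (tendsto_rpow_atTop_of_base_lt_one s (by linarith) hs1).comp tendsto_inv_nhdsGT_zero
  have hB : Tendsto (fun α : ℝ => t ^ α⁻¹) (nhdsWithin 0 (Set.Ioi 0)) atTop := by
    have h := Real.tendsto_exp_atTop.comp
      (Tendsto.const_mul_atTop (Real.log_pos ht1) tendsto_inv_nhdsGT_zero)
    exact h.congr fun α => (Real.rpow_def_of_pos (by positivity) _).symm
  have h1 : ∀ᶠ α : ℝ in nhdsWithin 0 (Set.Ioi 0), Real.exp (s ^ α⁻¹) - 1 < ε / 4 := by
    have hcomp : Tendsto (fun α : ℝ => Real.exp (s ^ α⁻¹)) (nhdsWithin 0 (Set.Ioi 0))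
        (nhds 1) := by
      have := (Real.continuous_exp.tendsto 0).comp hA
      simpa [Function.comp_def] using this
    have := hcomp.eventually_lt_const (show (1 : ℝ) < 1 + ε / 4 by linarith)
    filter_upwards [this] with α hα; linarith
  have h2 : ∀ᶠ α : ℝ in nhdsWithin 0 (Set.Ioi 0), Real.exp (-(t ^ α⁻¹)) < ε / 4 := by
    have hcomp : Tendsto (fun α : ℝ => Real.exp (-(t ^ α⁻¹))) (nhdsWithin 0 (Set.Ioi 0))
        (nhds 0) := Real.tendsto_exp_neg_atTop_nhds_zero.comp hB
    exact hcomp.eventually_lt_const (by linarith)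
  have h3 : ∀ᶠ α in nhdsWithin 0 (Set.Ioi 0), α ∈ Set.Ioo (0 : ℝ) 1 :=
    Filter.eventually_of_mem (Ioo_mem_nhdsGT_of_mem ⟨le_refl 0, zero_lt_one⟩)
      fun x hx => hx
  filter_upwards [h1, h2, h3] with α hα1 hα2 hα3
  intro y hy
  have hy' : (0 : ℝ) < y := hy
  obtain ⟨hlow_t, _⟩ := sandwich P hα3 (hXmeas α hα3) (hXstab α hα3) hy' (lt_trans one_pos ht1)
  obtain ⟨_, hup_s⟩ := sandwich P hα3 (hXmeas α hα3) (hXstab α hα3) hy' hs0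
  set G : ℝ := (P {ω | X α ω ^ α ≤ y}).toReal with hG
  rw [Real.dist_eq, abs_sub_lt_iff]
  have hneg : (-1 : ℝ) / y = -(1 / y) := by ring
  rw [hneg]
  have hd1 : Real.exp (-(1 / y)) - Real.exp (-(t / y)) ≤ (t - 1) / 1 :=
    exp_diff_le one_pos ht1.le hy'
  have hd2 : Real.exp (-(s / y)) - Real.exp (-(1 / y)) ≤ (1 - s) / s :=
    exp_diff_le hs0 hs1.le hy'
  have hRs1 : Real.exp (-(s / y)) ≤ 1 :=
    Real.exp_le_one_iff.2 (by have := div_pos hs0 hy'; linarith)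
  have hRs0 : 0 < Real.exp (-(s / y)) := Real.exp_pos _
  have hE1 : 1 ≤ Real.exp (s ^ α⁻¹) :=
    Real.one_le_exp (Real.rpow_nonneg hs0.le _)
  have ht4 : (t - 1) / 1 = ε / 4 := by rw [htdef]; ring
  constructor
  · -- exp(-(1/y)) - G < ε
    have : Real.exp (-(t / y)) - Real.exp (-(t ^ α⁻¹)) ≤ G := hlow_t
    linarith
  · -- G - exp(-(1/y)) < ε
    have hmul : 0 ≤ (Real.exp (s ^ α⁻¹) - 1) * (1 - Real.exp (-(s / y))) :=
      mul_nonneg (by linarith) (by linarith)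
    nlinarith [hup_s]
end

section
/- Let c be a positive integer. For each α ∈ (0,1), let X_{α,1}, ..., X_{α,c} be i.i.d. positive strictly α-stable random variables, let M_α = max_{1 ≤ i ≤ c} X_{α,i}^α, and let G_α(y) = P(X_α^α ≤ y) denote the cumulative distribution function of X_α^α. Then log G_α(M_α) + 1/M_α converges to 0 in probability as α → 0⁺. -/
open MeasureTheory ProbabilityTheory Filter
open scoped ENNReal NNReal

section Aux

variable {Ω : Type*} [MeasurableSpace Ω] {P : Measure Ω} [IsProbabilityMeasure P]

lemma stable_integrable {α : ℝ} {X : Ω → ℝ} (hm : Measurable X)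
    (hst : IsPositiveStable P α X) {l : ℝ} (hl : 0 ≤ l) :
    Integrable (fun ω => Real.exp (-(l * X ω))) P := by
  refine Integrable.mono' (integrable_const 1)
    ((hm.const_mul l).neg.exp.aestronglyMeasurable) ?_
  filter_upwards [hst.1] with ω hω
  rw [Real.norm_eq_abs, abs_of_pos (Real.exp_pos _)]
  rw [Real.exp_le_one_iff]
  nlinarith

lemma chernoff_upper {α : ℝ} {X : Ω → ℝ} (hm : Measurable X)
    (hst : IsPositiveStable P α X) {t l : ℝ} (hl : 0 ≤ l) :
    (P {ω | X ω ≤ t}).toReal ≤ Real.exp (l * t) * Real.exp (-(l ^ α)) := by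
  have hint := stable_integrable hm hst hl
  have hs : MeasurableSet {ω | X ω ≤ t} := hm measurableSet_Iic
  have h1 : Real.exp (-(l * t)) * (P {ω | X ω ≤ t}).toReal ≤ Real.exp (-(l ^ α)) := by
    rw [← hst.2 l hl]
    calc Real.exp (-(l * t)) * (P {ω | X ω ≤ t}).toReal
        = ∫ _ω in {ω | X ω ≤ t}, Real.exp (-(l * t)) ∂P := by
          rw [setIntegral_const, smul_eq_mul, mul_comm]; rfl
      _ ≤ ∫ ω in {ω | X ω ≤ t}, Real.exp (-(l * X ω)) ∂P := by
          refine setIntegral_mono_on (integrableOn_const (measure_ne_top _ _))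
            hint.integrableOn hs ?_
          intro ω hω
          have hω' : X ω ≤ t := hω
          exact Real.exp_le_exp.mpr (by nlinarith)
      _ ≤ ∫ ω, Real.exp (-(l * X ω)) ∂P :=
          setIntegral_le_integral hint
            (Filter.Eventually.of_forall fun ω => (Real.exp_pos _).le)
  calc (P {ω | X ω ≤ t}).toReal
      = Real.exp (l * t) * (Real.exp (-(l * t)) * (P {ω | X ω ≤ t}).toReal) := by
        rw [← mul_assoc, ← Real.exp_add]; simp
    _ ≤ Real.exp (l * t) * Real.exp (-(l ^ α)) :=
        mul_le_mul_of_nonneg_left h1 (Real.exp_pos _).le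

lemma chernoff_lower {α : ℝ} {X : Ω → ℝ} (hm : Measurable X)
    (hst : IsPositiveStable P α X) {t l : ℝ} (hl : 0 ≤ l) :
    Real.exp (-(l ^ α)) - Real.exp (-(l * t)) ≤ (P {ω | X ω ≤ t}).toReal := by
  have hint := stable_integrable hm hst hl
  have hs : MeasurableSet {ω | X ω ≤ t} := hm measurableSet_Iic
  have hsplit : ∫ ω, Real.exp (-(l * X ω)) ∂P
      = (∫ ω in {ω | X ω ≤ t}, Real.exp (-(l * X ω)) ∂P)
        + ∫ ω in {ω | X ω ≤ t}ᶜ, Real.exp (-(l * X ω)) ∂P :=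
    (integral_add_compl hs hint).symm
  have h1 : ∫ ω in {ω | X ω ≤ t}, Real.exp (-(l * X ω)) ∂P ≤ (P {ω | X ω ≤ t}).toReal := by
    have he : ∫ _ω in {ω | X ω ≤ t}, (1 : ℝ) ∂P = (P {ω | X ω ≤ t}).toReal := by
      rw [setIntegral_const, smul_eq_mul, mul_one]; rfl
    rw [← he]
    refine integral_mono_ae hint.integrableOn
      (integrableOn_const (measure_ne_top _ _)) ?_
    filter_upwards [ae_restrict_of_ae hst.1] with ω hω
    rw [Real.exp_le_one_iff]
    nlinarith
  have h2 : ∫ ω in {ω | X ω ≤ t}ᶜ, Real.exp (-(l * X ω)) ∂P ≤ Real.exp (-(l * t)) := by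
    calc ∫ ω in {ω | X ω ≤ t}ᶜ, Real.exp (-(l * X ω)) ∂P
        ≤ ∫ _ω in {ω | X ω ≤ t}ᶜ, Real.exp (-(l * t)) ∂P := by
          refine setIntegral_mono_on hint.integrableOn
            (integrableOn_const (measure_ne_top _ _)) hs.compl ?_
          intro ω hω
          have hω' : t < X ω := not_le.mp hω
          exact Real.exp_le_exp.mpr (by nlinarith)
      _ = (P {ω | X ω ≤ t}ᶜ).toReal * Real.exp (-(l * t)) := by
          rw [setIntegral_const, smul_eq_mul]; rfl
      _ ≤ 1 * Real.exp (-(l * t)) := by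
          refine mul_le_mul_of_nonneg_right ?_ (Real.exp_pos _).le
          exact ENNReal.toReal_le_of_le_ofReal one_pos.le (by simpa using prob_le_one)
      _ = Real.exp (-(l * t)) := one_mul _
  have hE := hst.2 l hl
  linarith [hE ▸ hsplit]

lemma pow_event_eq {α : ℝ} (hα : 0 < α) {X : Ω → ℝ} (hpos : ∀ᵐ ω ∂P, 0 < X ω)
    {y : ℝ} (hy : 0 < y) :
    P {ω | X ω ^ α ≤ y} = P {ω | X ω ≤ y ^ (1 / α)} := by
  apply measure_congr
  rw [Filter.eventuallyEq_set]
  filter_upwards [hpos] with ω hω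
  show X ω ^ α ≤ y ↔ X ω ≤ y ^ (1 / α)
  constructor
  · intro h
    have h2 : (X ω ^ α) ^ (1 / α) ≤ y ^ (1 / α) :=
      Real.rpow_le_rpow (Real.rpow_nonneg hω.le _) h (by positivity)
    rwa [← Real.rpow_mul hω.le, mul_one_div_cancel hα.ne', Real.rpow_one] at h2
  · intro h
    have h2 : X ω ^ α ≤ (y ^ (1 / α)) ^ α := Real.rpow_le_rpow hω.le h hα.le
    rwa [← Real.rpow_mul hy.le, one_div_mul_cancel hα.ne', Real.rpow_one] at h2

lemma pow_upper {α : ℝ} (hα : 0 < α) {X : Ω → ℝ} (hm : Measurable X)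
    (hst : IsPositiveStable P α X) {y k : ℝ} (hy : 0 < y) (hk : 0 ≤ k) :
    (P {ω | X ω ^ α ≤ y}).toReal ≤ Real.exp ((k * y) ^ (1 / α)) * Real.exp (-k) := by
  rw [pow_event_eq hα hst.1 hy]
  have h := chernoff_upper hm hst (t := y ^ (1 / α)) (l := k ^ (1 / α))
    (Real.rpow_nonneg hk _)
  have e1 : k ^ (1 / α) * y ^ (1 / α) = (k * y) ^ (1 / α) := (Real.mul_rpow hk hy.le).symm
  have e2 : (k ^ (1 / α)) ^ α = k := by
    rw [← Real.rpow_mul hk, one_div_mul_cancel hα.ne', Real.rpow_one]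
  rw [e1, e2] at h
  exact h

lemma pow_lower {α : ℝ} (hα : 0 < α) {X : Ω → ℝ} (hm : Measurable X)
    (hst : IsPositiveStable P α X) {y k : ℝ} (hy : 0 < y) (hk : 0 ≤ k) :
    Real.exp (-k) - Real.exp (-((k * y) ^ (1 / α))) ≤ (P {ω | X ω ^ α ≤ y}).toReal := by
  rw [pow_event_eq hα hst.1 hy]
  have h := chernoff_lower hm hst (t := y ^ (1 / α)) (l := k ^ (1 / α))
    (Real.rpow_nonneg hk _)
  have e1 : k ^ (1 / α) * y ^ (1 / α) = (k * y) ^ (1 / α) := (Real.mul_rpow hk hy.le).symm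
  have e2 : (k ^ (1 / α)) ^ α = k := by
    rw [← Real.rpow_mul hk, one_div_mul_cancel hα.ne', Real.rpow_one]
  rw [e1, e2] at h
  exact h

lemma key_bounds {α : ℝ} (hα : 0 < α) {X : Ω → ℝ} (hm : Measurable X)
    (hst : IsPositiveStable P α X) {a b ε y : ℝ} (ha : 0 < a) (hε : 0 < ε)
    (hεb : ε * b ≤ 1 / 2)
    (hC1 : Real.exp (-((1 + ε * a) ^ (1 / α)))
      ≤ Real.exp (-(1 / a + 2 * ε)) * (Real.exp ε - 1))
    (hC2 : (1 - ε * a) ^ (1 / α) ≤ ε)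
    (hya : a ≤ y) (hyb : y ≤ b) :
    Real.exp (-(1 / y + 2 * ε)) ≤ (P {ω | X ω ^ α ≤ y}).toReal ∧
      (P {ω | X ω ^ α ≤ y}).toReal ≤ Real.exp (2 * ε - 1 / y) := by
  have hy : 0 < y := lt_of_lt_of_le ha hya
  have hεy : ε * y ≤ 1 / 2 := le_trans (by nlinarith) hεb
  constructor
  · have h := pow_lower hα hm hst hy (k := 1 / y + ε) (by positivity)
    have e : (1 / y + ε) * y = 1 + ε * y := by field_simp; try ring
    rw [e] at h
    have h2 : Real.exp (-((1 + ε * y) ^ (1 / α)))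
        ≤ Real.exp (-(1 / y + 2 * ε)) * (Real.exp ε - 1) := by
      refine le_trans ?_ (le_trans hC1 ?_)
      · apply Real.exp_le_exp.mpr
        apply neg_le_neg
        exact Real.rpow_le_rpow (by positivity) (by nlinarith) (by positivity)
      · have he1 : (1 : ℝ) ≤ Real.exp ε := Real.one_le_exp hε.le
        have h1a : 1 / y ≤ 1 / a := one_div_le_one_div_of_le ha hya
        exact mul_le_mul_of_nonneg_right (Real.exp_le_exp.mpr (by linarith)) (by linarith)
    have e2 : Real.exp (-(1 / y + ε)) = Real.exp (-(1 / y + 2 * ε)) * Real.exp ε := by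
      rw [← Real.exp_add]; ring_nf
    nlinarith [h, h2, Real.exp_pos (-(1 / y + 2 * ε))]
  · have hk : (0 : ℝ) ≤ 1 / y - ε := by
      have h1 : ε ≤ 1 / y := by
        rw [le_div_iff₀ hy]
        linarith
      linarith
    have h := pow_upper hα hm hst hy (k := 1 / y - ε) hk
    have e : (1 / y - ε) * y = 1 - ε * y := by field_simp; try ring
    rw [e] at h
    have h2 : (1 - ε * y) ^ (1 / α) ≤ ε := by
      refine le_trans ?_ hC2
      exact Real.rpow_le_rpow (by nlinarith) (by nlinarith) (by positivity)
    calc (P {ω | X ω ^ α ≤ y}).toReal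
        ≤ Real.exp ((1 - ε * y) ^ (1 / α)) * Real.exp (-(1 / y - ε)) := h
      _ ≤ Real.exp ε * Real.exp (-(1 / y - ε)) :=
          mul_le_mul_of_nonneg_right (Real.exp_le_exp.mpr h2) (Real.exp_pos _).le
      _ = Real.exp (2 * ε - 1 / y) := by rw [← Real.exp_add]; ring_nf

lemma key_abs {α : ℝ} (hα : 0 < α) {X : Ω → ℝ} (hm : Measurable X)
    (hst : IsPositiveStable P α X) {a b ε y : ℝ} (ha : 0 < a) (hε : 0 < ε)
    (hεb : ε * b ≤ 1 / 2)
    (hC1 : Real.exp (-((1 + ε * a) ^ (1 / α)))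
      ≤ Real.exp (-(1 / a + 2 * ε)) * (Real.exp ε - 1))
    (hC2 : (1 - ε * a) ^ (1 / α) ≤ ε)
    (hya : a ≤ y) (hyb : y ≤ b) :
    |Real.log ((P {ω | X ω ^ α ≤ y}).toReal) + 1 / y| ≤ 2 * ε := by
  obtain ⟨hlow, hup⟩ := key_bounds hα hm hst ha hε hεb hC1 hC2 hya hyb
  have hG : 0 < (P {ω | X ω ^ α ≤ y}).toReal := lt_of_lt_of_le (Real.exp_pos _) hlow
  rw [abs_le]
  constructor
  · have hlow' : Real.exp (-(1 / y) - 2 * ε) ≤ (P {ω | X ω ^ α ≤ y}).toReal := by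
      rw [show -(1 / y) - 2 * ε = -(1 / y + 2 * ε) by ring]
      exact hlow
    have := (Real.le_log_iff_exp_le hG).mpr hlow'
    linarith
  · have := (Real.log_le_iff_le_exp hG).mpr hup
    linarith

end Aux

set_option maxHeartbeats 2000000 in
/-- For i.i.d. positive strictly `α`-stable `X α 1, …, X α c`, with
`M_α = max_i (X α i)^α` and `G_α` the CDF of `(X α)^α` (here computed from a generic copy
`X₀ α`), the quantity `log G_α(M_α) + 1 / M_α` converges to `0` in probability as `α → 0⁺`. -/
theorem log_cdf_max_tendsto_zero {Ω : Type*} [MeasurableSpace Ω]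
    (P : Measure Ω) [IsProbabilityMeasure P]
    (c : ℕ) (hc : 0 < c)
    (X : ℝ → Fin c → Ω → ℝ) (X₀ : ℝ → Ω → ℝ)
    (hXmeas : ∀ α ∈ Set.Ioo (0 : ℝ) 1, ∀ i, Measurable (X α i))
    (hX₀meas : ∀ α ∈ Set.Ioo (0 : ℝ) 1, Measurable (X₀ α))
    (hXindep : ∀ α ∈ Set.Ioo (0 : ℝ) 1, iIndepFun (X α) P)
    (hXstab : ∀ α ∈ Set.Ioo (0 : ℝ) 1, ∀ i, IsPositiveStable P α (X α i))
    (hX₀stab : ∀ α ∈ Set.Ioo (0 : ℝ) 1, IsPositiveStable P α (X₀ α)) :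
    ∀ δ : ℝ, 0 < δ →
      Tendsto
        (fun α : ℝ => P {ω | δ ≤
          |Real.log ((P {ω' | X₀ α ω' ^ α ≤
              Finset.univ.sup' (Finset.univ_nonempty_iff.mpr (Fin.pos_iff_nonempty.mp hc))
                (fun i => X α i ω ^ α)}).toReal) +
            1 / Finset.univ.sup' (Finset.univ_nonempty_iff.mpr (Fin.pos_iff_nonempty.mp hc))
                (fun i => X α i ω ^ α)|})
        (nhdsWithin 0 (Set.Ioi 0)) (nhds 0) := by
  intro δ hδ
  rw [ENNReal.tendsto_nhds_zero]
  intro ε hε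
  obtain ⟨η, hη0, hη1, hηε⟩ : ∃ η : ℝ, 0 < η ∧ η ≤ 1 ∧ ENNReal.ofReal η ≤ ε := by
    rcases le_total 1 ε with h | h
    · exact ⟨1, one_pos, le_refl 1, by simpa using h⟩
    · have hnet : ε ≠ ⊤ := by
        intro h'
        rw [h'] at h
        simp at h
      refine ⟨ε.toReal, ENNReal.toReal_pos hε.ne' hnet, ?_, ENNReal.ofReal_toReal_le⟩
      exact ENNReal.toReal_le_of_le_ofReal one_pos.le (by simpa using h)
  have hc0 : (0 : ℝ) < (c : ℝ) := by exact_mod_cast hc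
  set b : ℝ := max 1 (8 * c / η) with hbdef
  have hb1 : (1 : ℝ) ≤ b := le_max_left _ _
  have hb0 : (0 : ℝ) < b := lt_of_lt_of_le one_pos hb1
  have hbc : 8 * c / η ≤ b := le_max_right _ _
  set ε' : ℝ := min (δ / 4) (1 / (2 * b)) with hε'def
  have hε'0 : 0 < ε' := lt_min (by linarith) (by positivity)
  have hε'δ : ε' ≤ δ / 4 := min_le_left _ _
  have hε'r : ε' ≤ 1 / (2 * b) := min_le_right _ _
  have hε'b : ε' * b ≤ 1 / 2 := by
    calc ε' * b ≤ (1 / (2 * b)) * b := by nlinarith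
      _ = 1 / 2 := by field_simp; try ring
  set L : ℝ := 1 + Real.log (4 / η) with hLdef
  have hlog4 : 0 ≤ Real.log (4 / η) := Real.log_nonneg (by rw [le_div_iff₀ hη0]; linarith)
  have hL1 : 1 ≤ L := by rw [hLdef]; linarith
  have hL0 : 0 < L := by linarith
  set a : ℝ := 1 / (2 * L) with hadef
  have ha0 : 0 < a := by positivity
  have ha2 : a ≤ 1 / 2 := by
    rw [hadef]
    rw [div_le_div_iff₀ (by positivity) (by norm_num)]
    linarith
  have hab : a ≤ b := le_trans ha2 (by linarith)
  have hexpL : Real.exp (1 - L) = η / 4 := by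
    rw [hLdef, show (1 : ℝ) - (1 + Real.log (4 / η)) = -Real.log (4 / η) by ring,
      Real.exp_neg, Real.exp_log (by positivity), inv_div]
  have hε'half : ε' ≤ 1 / 2 := le_trans hε'r (by
    rw [div_le_div_iff₀ (by positivity) (by norm_num)]
    linarith)
  have hqa0 : 0 < ε' * a := by positivity
  have hqa1 : ε' * a ≤ 1 / 4 := by nlinarith
  have hinv : Tendsto (fun α : ℝ => 1 / α) (nhdsWithin (0 : ℝ) (Set.Ioi 0)) atTop := by
    simpa [one_div] using tendsto_inv_nhdsGT_zero (𝕜 := ℝ)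
  have hE2 : ∀ᶠ α in nhdsWithin (0 : ℝ) (Set.Ioi 0), (1 - ε' * a) ^ (1 / α) ≤ ε' := by
    have ht : Tendsto (fun x : ℝ => (1 - ε' * a) ^ x) atTop (nhds 0) :=
      tendsto_rpow_atTop_of_base_lt_one _ (by nlinarith) (by nlinarith)
    exact ((ht.comp hinv).eventually_lt_const hε'0).mono fun _ h => h.le
  have hE1 : ∀ᶠ α in nhdsWithin (0 : ℝ) (Set.Ioi 0),
      Real.exp (-((1 + ε' * a) ^ (1 / α)))
        ≤ Real.exp (-(1 / a + 2 * ε')) * (Real.exp ε' - 1) := by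
    have hr1 : (1 : ℝ) < 1 + ε' * a := by linarith
    have ht : Tendsto (fun x : ℝ => (1 + ε' * a) ^ x) atTop atTop := by
      have : ∀ x : ℝ, (1 + ε' * a) ^ x = Real.exp (Real.log (1 + ε' * a) * x) := fun x =>
        Real.rpow_def_of_pos (by linarith) x
      simp only [this]
      exact Real.tendsto_exp_atTop.comp
        ((tendsto_const_mul_atTop_of_pos (Real.log_pos hr1)).mpr tendsto_id)
    have ht2 : Tendsto (fun α : ℝ => Real.exp (-((1 + ε' * a) ^ (1 / α))))
        (nhdsWithin (0 : ℝ) (Set.Ioi 0)) (nhds 0) :=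
      Real.tendsto_exp_atBot.comp (tendsto_neg_atTop_atBot.comp (ht.comp hinv))
    have hpos : 0 < Real.exp (-(1 / a + 2 * ε')) * (Real.exp ε' - 1) := by
      have h1e : (1 : ℝ) < Real.exp ε' := by
        have := Real.add_one_le_exp ε'
        linarith
      exact mul_pos (Real.exp_pos _) (by linarith)
    exact (ht2.eventually_lt_const hpos).mono fun _ h => h.le
  have hIoo : ∀ᶠ α in nhdsWithin (0 : ℝ) (Set.Ioi 0), α ∈ Set.Ioo (0 : ℝ) 1 :=
    eventually_of_mem (Ioo_mem_nhdsGT_of_mem ⟨le_rfl, one_pos⟩) fun _ hx => hx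
  filter_upwards [hIoo, hE1, hE2] with α hα hC1 hC2
  have hα0 : 0 < α := hα.1
  set i0 : Fin c := ⟨0, hc⟩ with hi0def
  have h_small : P {ω | Finset.univ.sup'
      (Finset.univ_nonempty_iff.mpr (Fin.pos_iff_nonempty.mp hc))
      (fun i => X α i ω ^ α) < a} ≤ ENNReal.ofReal (η / 4) := by
    have hss : {ω | Finset.univ.sup'
        (Finset.univ_nonempty_iff.mpr (Fin.pos_iff_nonempty.mp hc))
        (fun i => X α i ω ^ α) < a} ⊆ {ω | X α i0 ω ^ α ≤ a} := by
      intro ω hω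
      have hle : X α i0 ω ^ α ≤ Finset.univ.sup'
          (Finset.univ_nonempty_iff.mpr (Fin.pos_iff_nonempty.mp hc))
          (fun i => X α i ω ^ α) :=
        Finset.le_sup' (fun i => X α i ω ^ α) (Finset.mem_univ i0)
      exact le_of_lt (lt_of_le_of_lt hle hω)
    refine le_trans (measure_mono hss) ?_
    have hch := pow_upper hα0 (hXmeas α hα i0) (hXstab α hα i0) ha0 (k := L) hL0.le
    have hLa : L * a = 1 / 2 := by rw [hadef]; field_simp; try ring
    rw [hLa] at hch
    have hhalf : ((1 : ℝ) / 2) ^ (1 / α) ≤ 1 :=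
      Real.rpow_le_one (by norm_num) (by norm_num) (by positivity)
    have htr : (P {ω | X α i0 ω ^ α ≤ a}).toReal ≤ η / 4 := by
      calc (P {ω | X α i0 ω ^ α ≤ a}).toReal
          ≤ Real.exp (((1 : ℝ) / 2) ^ (1 / α)) * Real.exp (-L) := hch
        _ ≤ Real.exp 1 * Real.exp (-L) :=
            mul_le_mul_of_nonneg_right (Real.exp_le_exp.mpr hhalf) (Real.exp_pos _).le
        _ = Real.exp (1 - L) := by rw [← Real.exp_add]; ring_nf
        _ = η / 4 := hexpL
    calc P {ω | X α i0 ω ^ α ≤ a}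
        = ENNReal.ofReal ((P {ω | X α i0 ω ^ α ≤ a}).toReal) :=
          (ENNReal.ofReal_toReal (measure_ne_top _ _)).symm
      _ ≤ ENNReal.ofReal (η / 4) := ENNReal.ofReal_le_ofReal htr
  have h_big : P {ω | b < Finset.univ.sup'
      (Finset.univ_nonempty_iff.mpr (Fin.pos_iff_nonempty.mp hc))
      (fun i => X α i ω ^ α)} ≤ ENNReal.ofReal (η / 4) := by
    have hUn : {ω | b < Finset.univ.sup'
        (Finset.univ_nonempty_iff.mpr (Fin.pos_iff_nonempty.mp hc))
        (fun i => X α i ω ^ α)} ⊆ ⋃ i, {ω | b < X α i ω ^ α} := by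
      intro ω hω
      rw [Set.mem_setOf_eq, Finset.lt_sup'_iff] at hω
      obtain ⟨i, _, hi⟩ := hω
      exact Set.mem_iUnion.mpr ⟨i, hi⟩
    refine le_trans (measure_mono hUn) (le_trans (measure_iUnion_le _) ?_)
    have heach : ∀ i, P {ω | b < X α i ω ^ α} ≤ ENNReal.ofReal (η / (4 * c)) := by
      intro i
      have hkey := (key_bounds hα0 (hXmeas α hα i) (hXstab α hα i) ha0 hε'0 hε'b hC1 hC2
        hab (le_refl b)).1
      have h2e : 2 * ε' ≤ 1 / b := by
        calc 2 * ε' ≤ 2 * (1 / (2 * b)) := by linarith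
          _ = 1 / b := by field_simp
      have hbb : 2 / b ≤ η / (4 * c) := by
        rw [div_le_div_iff₀ hb0 (by positivity)]
        have h8 : 8 * c ≤ η * b := by
          have := hbc
          rw [div_le_iff₀ hη0] at this
          linarith
        linarith
      have e1 : 1 - (1 / b + 2 * ε') ≤ Real.exp (-(1 / b + 2 * ε')) := by
        have := Real.add_one_le_exp (-(1 / b + 2 * ε'))
        linarith
      have h1b : (1 : ℝ) / b + 2 * ε' ≤ 2 / b := by
        have : (1 : ℝ) / b + 1 / b = 2 / b := by ring
        linarith
      have h1 : 1 - η / (4 * c) ≤ (P {ω | X α i ω ^ α ≤ b}).toReal := by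
        linarith
      have hms : MeasurableSet {ω | X α i ω ^ α ≤ b} := by
        have hmr : Measurable fun ω => X α i ω ^ α :=
          (Real.continuous_rpow_const hα0.le).measurable.comp (hXmeas α hα i)
        exact hmr measurableSet_Iic
      have hcompl : {ω | b < X α i ω ^ α} = {ω | X α i ω ^ α ≤ b}ᶜ := by
        ext ω
        simp [not_le]
      rw [hcompl, prob_compl_eq_one_sub hms]
      have hPS : ENNReal.ofReal (1 - η / (4 * c)) ≤ P {ω | X α i ω ^ α ≤ b} := by
        calc ENNReal.ofReal (1 - η / (4 * c))
            ≤ ENNReal.ofReal ((P {ω | X α i ω ^ α ≤ b}).toReal) :=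
              ENNReal.ofReal_le_ofReal h1
          _ = P {ω | X α i ω ^ α ≤ b} := ENNReal.ofReal_toReal (measure_ne_top _ _)
      have h4c : (1 : ℝ) ≤ 4 * c := by
        have hc1 : (1 : ℝ) ≤ (c : ℝ) := by exact_mod_cast hc
        linarith
      have hηc1 : η / (4 * c) ≤ 1 := by
        rw [div_le_one (by positivity)]
        linarith
      calc (1 : ENNReal) - P {ω | X α i ω ^ α ≤ b}
          ≤ 1 - ENNReal.ofReal (1 - η / (4 * c)) := tsub_le_tsub_left hPS _
        _ = ENNReal.ofReal 1 - ENNReal.ofReal (1 - η / (4 * c)) := by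
            rw [ENNReal.ofReal_one]
        _ = ENNReal.ofReal (1 - (1 - η / (4 * c))) := by
            rw [ENNReal.ofReal_sub 1 (show (0 : ℝ) ≤ 1 - η / (4 * c) by linarith)]
        _ = ENNReal.ofReal (η / (4 * c)) := by ring_nf
    refine le_trans (ENNReal.tsum_le_tsum heach) ?_
    rw [tsum_fintype]
    rw [Finset.sum_const, Finset.card_univ, Fintype.card_fin, nsmul_eq_mul]
    have hcast : (c : ℝ≥0∞) = ENNReal.ofReal c := by
      simp [ENNReal.ofReal_natCast]
    rw [hcast, ← ENNReal.ofReal_mul (by positivity)]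
    apply ENNReal.ofReal_le_ofReal
    have hcc : (c : ℝ) * (η / (4 * c)) = η / 4 := by field_simp; try ring
    rw [hcc]
  have hsub : {ω | δ ≤
      |Real.log ((P {ω' | X₀ α ω' ^ α ≤
          Finset.univ.sup' (Finset.univ_nonempty_iff.mpr (Fin.pos_iff_nonempty.mp hc))
            (fun i => X α i ω ^ α)}).toReal) +
        1 / Finset.univ.sup' (Finset.univ_nonempty_iff.mpr (Fin.pos_iff_nonempty.mp hc))
            (fun i => X α i ω ^ α)|} ⊆
      {ω | Finset.univ.sup' (Finset.univ_nonempty_iff.mpr (Fin.pos_iff_nonempty.mp hc))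
          (fun i => X α i ω ^ α) < a} ∪
      {ω | b < Finset.univ.sup' (Finset.univ_nonempty_iff.mpr (Fin.pos_iff_nonempty.mp hc))
          (fun i => X α i ω ^ α)} := by
    intro ω hω
    by_contra hcon
    simp only [Set.mem_union, Set.mem_setOf_eq, not_or, not_lt] at hcon
    obtain ⟨hMa, hMb⟩ := hcon
    have habs := key_abs hα0 (hX₀meas α hα) (hX₀stab α hα) ha0 hε'0 hε'b hC1 hC2 hMa hMb
    have hω' : δ ≤ |Real.log ((P {ω' | X₀ α ω' ^ α ≤
        Finset.univ.sup' (Finset.univ_nonempty_iff.mpr (Fin.pos_iff_nonempty.mp hc))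
          (fun i => X α i ω ^ α)}).toReal) +
        1 / Finset.univ.sup' (Finset.univ_nonempty_iff.mpr (Fin.pos_iff_nonempty.mp hc))
          (fun i => X α i ω ^ α)| := hω
    have : δ ≤ 2 * ε' := le_trans hω' habs
    linarith
  calc P _ ≤ P ({ω | Finset.univ.sup'
        (Finset.univ_nonempty_iff.mpr (Fin.pos_iff_nonempty.mp hc))
        (fun i => X α i ω ^ α) < a} ∪
      {ω | b < Finset.univ.sup' (Finset.univ_nonempty_iff.mpr (Fin.pos_iff_nonempty.mp hc))
        (fun i => X α i ω ^ α)}) := measure_mono hsub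
    _ ≤ P {ω | Finset.univ.sup'
        (Finset.univ_nonempty_iff.mpr (Fin.pos_iff_nonempty.mp hc))
        (fun i => X α i ω ^ α) < a} +
      P {ω | b < Finset.univ.sup' (Finset.univ_nonempty_iff.mpr (Fin.pos_iff_nonempty.mp hc))
        (fun i => X α i ω ^ α)} := measure_union_le _ _
    _ ≤ ENNReal.ofReal (η / 4) + ENNReal.ofReal (η / 4) := add_le_add h_small h_big
    _ = ENNReal.ofReal (η / 2) := by
        rw [← ENNReal.ofReal_add (by positivity) (by positivity)]
        congr 1
        ring
    _ ≤ ENNReal.ofReal η := ENNReal.ofReal_le_ofReal (by linarith)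
    _ ≤ ε := hηε
end

section
/- Let I be a finite nonempty index set of cardinality c, let a_i > 0 for i ∈ I, and let m be a positive integer. For each α ∈ (0,1), let (X_{α,i,j})_{i ∈ I, 1 ≤ j ≤ m} be i.i.d. positive strictly α-stable random variables; define V_j = ∑_{i ∈ I} a_i·X_{α,i,j} and M_j = max_{i ∈ I} X_{α,i,j}^α for j = 1, ..., m, and let F_α(y) = P(X_α^α ≤ y) be the cumulative distribution function of X_α^α. Then c·∑_{j=1}^m V_j^{-α} + c·∑_{j=1}^m log F_α(M_j) converges to 0 in probability as α → 0⁺, and in particular V_j^{-α} + log F_α(M_j) converges to 0 in probability as α → 0⁺ for each j = 1, ..., m. That is, the pivotal quantities of the random projection sketch and of the maximal-term sketch are asymptotically equivalent for small α. -/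
open MeasureTheory ProbabilityTheory Filter

section cdf
variable {Ω : Type*} [MeasurableSpace Ω] {P : Measure Ω} [IsProbabilityMeasure P]

lemma stable_cdf_upper {α : ℝ} (hα : 0 < α) {X : Ω → ℝ} (hm : Measurable X)
    (hs : IsPositiveStable P α X) {y u : ℝ} (hy : 0 < y) (hu : 0 < u) :
    (P {ω | X ω ^ α ≤ y}).toReal ≤ Real.exp (u ^ (1/α) - u / y) := by
  set l : ℝ := (u / y) ^ (1/α) with hl_def
  have hl : 0 < l := Real.rpow_pos_of_pos (div_pos hu hy) _
  have hlα : l ^ α = u / y := by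
    rw [hl_def, ← Real.rpow_mul (div_pos hu hy).le, one_div_mul_cancel hα.ne',
      Real.rpow_one]
  set A : Set Ω := {ω | X ω ^ α ≤ y} with hA_def
  have hA : MeasurableSet A := measurableSet_le (hm.pow_const α) measurable_const
  have hpt : ∀ᵐ ω ∂P, A.indicator (fun _ => Real.exp (-(u ^ (1/α)))) ω
      ≤ Real.exp (-(l * X ω)) := by
    filter_upwards [hs.1] with ω hω
    by_cases hωA : ω ∈ A
    · rw [Set.indicator_of_mem hωA]
      apply Real.exp_le_exp.2
      apply neg_le_neg
      have hXle : X ω ≤ y ^ (1/α) := by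
        have h1 : (X ω ^ α) ^ (1/α) ≤ y ^ (1/α) :=
          Real.rpow_le_rpow (Real.rpow_nonneg hω.le α) hωA (by positivity)
        rwa [← Real.rpow_mul hω.le, mul_one_div_cancel hα.ne', Real.rpow_one] at h1
      calc l * X ω ≤ l * y ^ (1/α) := mul_le_mul_of_nonneg_left hXle hl.le
        _ = u ^ (1/α) := by
            rw [hl_def, ← Real.mul_rpow (by positivity) (by positivity),
              div_mul_cancel₀ _ hy.ne']
    · rw [Set.indicator_of_notMem hωA]; positivity
  have hint1 : Integrable (A.indicator fun _ => Real.exp (-(u ^ (1/α)))) P :=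
    (integrable_const _).indicator hA
  have hint2 : Integrable (fun ω => Real.exp (-(l * X ω))) P := by
    apply Integrable.mono' (integrable_const (1:ℝ))
      ((hm.const_mul l).neg.exp.aestronglyMeasurable)
    filter_upwards [hs.1] with ω hω
    rw [Real.norm_eq_abs, Real.abs_exp]
    exact Real.exp_le_one_iff.2 (neg_nonpos.2 (mul_nonneg hl.le hω.le))
  have hkey := integral_mono_ae hint1 hint2 hpt
  rw [integral_indicator_const _ hA, hs.2 l hl.le, hlα, smul_eq_mul] at hkey
  calc (P A).toReal
      = (P A).toReal * Real.exp (-(u ^ (1/α))) * Real.exp (u ^ (1/α)) := by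
        rw [mul_assoc, ← Real.exp_add]; simp
    _ ≤ Real.exp (-(u / y)) * Real.exp (u ^ (1/α)) :=
        mul_le_mul_of_nonneg_right hkey (Real.exp_pos _).le
    _ = Real.exp (u ^ (1/α) - u / y) := by rw [← Real.exp_add]; ring_nf

lemma stable_cdf_lower {α : ℝ} (hα : 0 < α) {X : Ω → ℝ} (hm : Measurable X)
    (hs : IsPositiveStable P α X) {y u : ℝ} (hy : 0 < y) (hu : 0 < u) :
    Real.exp (-(u / y)) - Real.exp (-(u ^ (1/α))) ≤ (P {ω | X ω ^ α ≤ y}).toReal := by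
  set l : ℝ := (u / y) ^ (1/α) with hl_def
  have hl : 0 < l := Real.rpow_pos_of_pos (div_pos hu hy) _
  have hlα : l ^ α = u / y := by
    rw [hl_def, ← Real.rpow_mul (div_pos hu hy).le, one_div_mul_cancel hα.ne',
      Real.rpow_one]
  set A : Set Ω := {ω | X ω ^ α ≤ y} with hA_def
  have hA : MeasurableSet A := measurableSet_le (hm.pow_const α) measurable_const
  have hpt : ∀ᵐ ω ∂P, Real.exp (-(l * X ω))
      ≤ A.indicator (fun _ => (1:ℝ)) ω + Real.exp (-(u ^ (1/α))) := by
    filter_upwards [hs.1] with ω hω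
    by_cases hωA : ω ∈ A
    · rw [Set.indicator_of_mem hωA]
      have : Real.exp (-(l * X ω)) ≤ 1 :=
        Real.exp_le_one_iff.2 (neg_nonpos.2 (mul_nonneg hl.le hω.le))
      have := (Real.exp_pos (-(u ^ (1/α)))).le
      linarith
    · rw [Set.indicator_of_notMem hωA, zero_add]
      apply Real.exp_le_exp.2
      apply neg_le_neg
      have hωA' : y < X ω ^ α := lt_of_not_ge hωA
      have hXge : y ^ (1/α) ≤ X ω := by
        have h1 : y ^ (1/α) ≤ (X ω ^ α) ^ (1/α) :=
          Real.rpow_le_rpow hy.le hωA'.le (by positivity)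
        rwa [← Real.rpow_mul hω.le, mul_one_div_cancel hα.ne', Real.rpow_one] at h1
      calc u ^ (1/α) = l * y ^ (1/α) := by
            rw [hl_def, ← Real.mul_rpow (by positivity) (by positivity),
              div_mul_cancel₀ _ hy.ne']
        _ ≤ l * X ω := mul_le_mul_of_nonneg_left hXge hl.le
  have hint1 : Integrable (fun ω => Real.exp (-(l * X ω))) P := by
    apply Integrable.mono' (integrable_const (1:ℝ))
      ((hm.const_mul l).neg.exp.aestronglyMeasurable)
    filter_upwards [hs.1] with ω hω
    rw [Real.norm_eq_abs, Real.abs_exp]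
    exact Real.exp_le_one_iff.2 (neg_nonpos.2 (mul_nonneg hl.le hω.le))
  have hint2 : Integrable (fun ω => A.indicator (fun _ => (1:ℝ)) ω
      + Real.exp (-(u ^ (1/α)))) P :=
    ((integrable_const _).indicator hA).add (integrable_const _)
  have hkey := integral_mono_ae hint1 hint2 hpt
  rw [hs.2 l hl.le, hlα] at hkey
  rw [integral_add ((integrable_const _).indicator hA) (integrable_const _),
    integral_indicator_const _ hA, integral_const, probReal_univ] at hkey
  simp only [smul_eq_mul, mul_one, ENNReal.toReal_one, one_smul, Measure.real] at hkey
  linarith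

end cdf

lemma aux_one_sub_inv {s : ℝ} (hs : 1 ≤ s) : 1 - s⁻¹ ≤ s - 1 := by
  have hspos : 0 < s := lt_of_lt_of_le one_pos hs
  have h := mul_inv_cancel₀ hspos.ne'
  nlinarith [sq_nonneg (s - 1), hspos]

set_option maxHeartbeats 2000000 in
lemma perj {Ω : Type*} [MeasurableSpace Ω]
    (P : Measure Ω) [IsProbabilityMeasure P]
    {I : Type*} [Fintype I] [Nonempty I]
    (a : I → ℝ) (ha : ∀ i, 0 < a i)
    (m : ℕ) (hm : 0 < m)
    (X : ℝ → I × Fin m → Ω → ℝ) (X₀ : ℝ → Ω → ℝ)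
    (hXmeas : ∀ α ∈ Set.Ioo (0 : ℝ) 1, ∀ p, Measurable (X α p))
    (hX₀meas : ∀ α ∈ Set.Ioo (0 : ℝ) 1, Measurable (X₀ α))
    (hXstab : ∀ α ∈ Set.Ioo (0 : ℝ) 1, ∀ p, IsPositiveStable P α (X α p))
    (hX₀stab : ∀ α ∈ Set.Ioo (0 : ℝ) 1, IsPositiveStable P α (X₀ α))
    (j : Fin m) (δ : ℝ) (hδ : 0 < δ) :
    Tendsto
      (fun α : ℝ => P {ω | δ ≤
        |(∑ i : I, a i * X α (i, j) ω) ^ (-α) +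
          Real.log ((P {ω' | X₀ α ω' ^ α ≤
            Finset.univ.sup' Finset.univ_nonempty
              (fun i : I => X α (i, j) ω ^ α)}).toReal)|})
      (nhdsWithin 0 (Set.Ioi 0)) (nhds 0) := by
  rw [ENNReal.tendsto_nhds_zero]
  intro η hη
  by_cases hηtop : η = ⊤
  · exact Filter.Eventually.of_forall fun α => hηtop ▸ le_top
  set η' : ℝ := min 1 η.toReal with hη'_def
  have hη'pos : 0 < η' := lt_min one_pos (ENNReal.toReal_pos hη.ne' hηtop)
  have hη'le1 : η' ≤ 1 := min_le_left _ _
  have hofReal : ENNReal.ofReal η' ≤ η := by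
    calc ENNReal.ofReal η' ≤ ENNReal.ofReal η.toReal :=
          ENNReal.ofReal_le_ofReal (min_le_right _ _)
      _ = η := ENNReal.ofReal_toReal hηtop
  have hlogη' : Real.log η' ≤ 0 := Real.log_nonpos hη'pos.le hη'le1
  set y0 : ℝ := (2 * (1 - Real.log η'))⁻¹ with hy0_def
  have hy0 : 0 < y0 := by
    rw [hy0_def]
    have : 0 < 1 - Real.log η' := by linarith
    positivity
  have hy0inv : (1/2) / y0 = 1 - Real.log η' := by
    rw [hy0_def]
    have h2 : (2:ℝ) * (1 - Real.log η') ≠ 0 := by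
      have : 0 < 1 - Real.log η' := by linarith
      positivity
    field_simp
  set ε : ℝ := min (1/2) (δ * y0 / 8) with hε_def
  have hεpos : 0 < ε := lt_min (by norm_num) (by positivity)
  have hε12 : ε ≤ 1/2 := min_le_left _ _
  have hεy0 : ε ≤ δ * y0 / 8 := min_le_right _ _
  set b : ℝ := Finset.univ.sup' Finset.univ_nonempty (fun i : I => max (a i) (a i)⁻¹)
    with hb_def
  have hab : ∀ i, a i ≤ b := by
    intro i
    have h := Finset.le_sup' (fun i : I => max (a i) (a i)⁻¹) (Finset.mem_univ i)
    rw [← hb_def] at h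
    exact le_trans (le_max_left _ _) h
  have hainvb : ∀ i, (a i)⁻¹ ≤ b := by
    intro i
    have h := Finset.le_sup' (fun i : I => max (a i) (a i)⁻¹) (Finset.mem_univ i)
    rw [← hb_def] at h
    exact le_trans (le_max_right _ _) h
  have hb1 : 1 ≤ b := by
    set i0 := Classical.arbitrary I
    rcases le_or_gt 1 (a i0) with h | h
    · exact le_trans h (hab i0)
    · exact le_trans (one_lt_inv₀ (ha i0) |>.2 h).le (hainvb i0)
  have hcard1 : (1:ℝ) ≤ (Fintype.card I : ℝ) := by exact_mod_cast Fintype.card_pos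
  set C : ℝ := (Fintype.card I : ℝ) * b with hC_def
  have hbpos : 0 < b := lt_of_lt_of_le one_pos hb1
  have hC1 : 1 ≤ C := le_trans hb1 (le_mul_of_one_le_left hbpos.le hcard1)
  have hCpos : 0 < C := lt_of_lt_of_le one_pos hC1
  -- eventual conditions on α
  have h0 : ∀ᶠ α in nhdsWithin (0:ℝ) (Set.Ioi 0), α ∈ Set.Ioo (0:ℝ) 1 :=
    Ioo_mem_nhdsGT_of_mem ⟨le_refl 0, one_pos⟩
  have hinvtop : Tendsto (fun α : ℝ => 1/α) (nhdsWithin 0 (Set.Ioi 0)) atTop := by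
    simpa [one_div] using tendsto_inv_nhdsGT_zero (𝕜 := ℝ)
  have h1 : ∀ᶠ α in nhdsWithin (0:ℝ) (Set.Ioi 0), (1 - ε) ^ (1/α) < δ/8 := by
    have h1ε : 0 < 1 - ε := by linarith
    have hlog : Real.log (1 - ε) < 0 := Real.log_neg h1ε (by linarith)
    have hbnd : Tendsto (fun α : ℝ => (1/α) * Real.log (1 - ε))
        (nhdsWithin 0 (Set.Ioi 0)) atBot := hinvtop.atTop_mul_const_of_neg hlog
    have htend : Tendsto (fun α : ℝ => (1 - ε) ^ (1/α))
        (nhdsWithin 0 (Set.Ioi 0)) (nhds 0) := by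
      refine (Real.tendsto_exp_atBot.comp hbnd).congr fun α => ?_
      simp only [Function.comp]
      rw [Real.rpow_def_of_pos h1ε, mul_comm]
    exact htend.eventually_lt_const (by positivity)
  have h2 : ∀ᶠ α in nhdsWithin (0:ℝ) (Set.Ioi 0),
      Real.exp (-((1 + ε) ^ (1/α))) <
        Real.exp (-(2/y0)) * (1 - Real.exp (-(δ/4))) := by
    have hlog : 0 < Real.log (1 + ε) := Real.log_pos (by linarith)
    have hbnd : Tendsto (fun α : ℝ => (1/α) * Real.log (1 + ε))
        (nhdsWithin 0 (Set.Ioi 0)) atTop := hinvtop.atTop_mul_const hlog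
    have hinner : Tendsto (fun α : ℝ => (1 + ε) ^ (1/α))
        (nhdsWithin 0 (Set.Ioi 0)) atTop := by
      refine (Real.tendsto_exp_atTop.comp hbnd).congr fun α => ?_
      simp only [Function.comp]
      rw [Real.rpow_def_of_pos (by linarith : (0:ℝ) < 1 + ε), mul_comm]
    have htend : Tendsto (fun α : ℝ => Real.exp (-((1 + ε) ^ (1/α))))
        (nhdsWithin 0 (Set.Ioi 0)) (nhds 0) :=
      Real.tendsto_exp_neg_atTop_nhds_zero.comp hinner
    apply htend.eventually_lt_const
    have hlt : Real.exp (-(δ/4)) < 1 := Real.exp_lt_one_iff.2 (by linarith)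
    exact mul_pos (Real.exp_pos _) (by linarith)
  have h3 : ∀ᶠ α in nhdsWithin (0:ℝ) (Set.Ioi 0), C ^ α < 1 + δ * y0 / 2 := by
    have htend : Tendsto (fun α : ℝ => C ^ α) (nhdsWithin 0 (Set.Ioi 0)) (nhds 1) := by
      have hmul : Tendsto (fun α : ℝ => α * Real.log C) (nhds 0) (nhds 0) := by
        have h := (continuous_id.mul (continuous_const (y := Real.log C))).tendsto (0:ℝ)
        simpa [Pi.mul_def] using h
      have hc : Tendsto (fun α : ℝ => Real.exp (α * Real.log C)) (nhds 0) (nhds 1) := by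
        simpa [Function.comp_def] using (Real.continuous_exp.tendsto 0).comp hmul
      refine (hc.mono_left nhdsWithin_le_nhds).congr fun α => ?_
      rw [Real.rpow_def_of_pos hCpos, mul_comm]
    exact htend.eventually_lt_const (by have := mul_pos hδ hy0; linarith)
  filter_upwards [h0, h1, h2, h3] with α hαmem hc1 hc2 hc3
  obtain ⟨hα0, hα1⟩ := hαmem
  set i0 := Classical.arbitrary I with hi0_def
  set B : Set Ω := {ω | X α (i0, j) ω ^ α ≤ y0} with hB_def
  set N : Set Ω := {ω | ¬ ∀ i, 0 < X α (i, j) ω} with hN_def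
  have hPN : P N = 0 :=
    (MeasureTheory.ae_all_iff).2 fun i => (hXstab α ⟨hα0, hα1⟩ (i, j)).1
  have hsub : {ω | δ ≤
      |(∑ i : I, a i * X α (i, j) ω) ^ (-α) +
        Real.log ((P {ω' | X₀ α ω' ^ α ≤
          Finset.univ.sup' Finset.univ_nonempty
            (fun i : I => X α (i, j) ω ^ α)}).toReal)|} ⊆ B ∪ N := by
    intro ω hωE
    simp only [Set.mem_setOf_eq] at hωE
    by_contra hcon
    simp only [Set.mem_union, not_or] at hcon
    obtain ⟨hωB, hωN⟩ := hcon
    have hx : ∀ i, 0 < X α (i, j) ω := not_not.1 hωN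
    have hωB' : y0 < X α (i0, j) ω ^ α := by
      by_contra h
      exact hωB (by simpa [hB_def] using not_lt.1 h)
    set M : ℝ := Finset.univ.sup' Finset.univ_nonempty
      (fun i : I => X α (i, j) ω ^ α) with hM_def
    have hleM : ∀ i, X α (i, j) ω ^ α ≤ M := by
      intro i
      have h := Finset.le_sup' (fun i : I => X α (i, j) ω ^ α) (Finset.mem_univ i)
      rw [← hM_def] at h
      exact h
    have hMy0 : y0 ≤ M := le_trans hωB'.le (hleM i0)
    have hMpos : 0 < M := lt_of_lt_of_le hy0 hMy0
    set V : ℝ := ∑ i : I, a i * X α (i, j) ω with hV_def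
    have hVpos : 0 < V :=
      Finset.sum_pos (fun i _ => mul_pos (ha i) (hx i)) Finset.univ_nonempty
    set F : ℝ := (P {ω' | X₀ α ω' ^ α ≤ M}).toReal with hF_def
    -- hωE : δ ≤ |V ^ (-α) + Real.log F|
    set Nx : ℝ := Finset.univ.sup' Finset.univ_nonempty
      (fun i : I => a i * X α (i, j) ω) with hNx_def
    have hNxpos : 0 < Nx := by
      obtain ⟨k, _, hk⟩ := Finset.exists_mem_eq_sup' Finset.univ_nonempty
        (fun i : I => a i * X α (i, j) ω)
      rw [hNx_def, hk]; exact mul_pos (ha k) (hx k)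
    have hleNx : ∀ i, a i * X α (i, j) ω ≤ Nx := by
      intro i
      have h := Finset.le_sup' (fun i : I => a i * X α (i, j) ω) (Finset.mem_univ i)
      rw [← hNx_def] at h
      exact h
    have hNV : Nx ≤ V := by
      rw [hNx_def]
      exact Finset.sup'_le _ _ fun i _ =>
        Finset.single_le_sum (fun k _ => (mul_pos (ha k) (hx k)).le) (Finset.mem_univ i)
    have hVcN : V ≤ (Fintype.card I : ℝ) * Nx := by
      have h := Finset.sum_le_card_nsmul Finset.univ
        (fun i => a i * X α (i, j) ω) Nx (fun i _ => hleNx i)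
      rwa [Finset.card_univ, nsmul_eq_mul] at h
    have hCαpos : 0 < C ^ α := Real.rpow_pos_of_pos hCpos α
    have hCα1 : 1 ≤ C ^ α := Real.one_le_rpow hC1 hα0.le
    have hVαub : V ^ α ≤ C ^ α * M := by
      obtain ⟨k, _, hk⟩ := Finset.exists_mem_eq_sup' Finset.univ_nonempty
        (fun i : I => a i * X α (i, j) ω)
      have h1 : V ^ α ≤ ((Fintype.card I : ℝ) * Nx) ^ α :=
        Real.rpow_le_rpow hVpos.le hVcN hα0.le
      have h2 : ((Fintype.card I : ℝ) * Nx) ^ α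
          = (Fintype.card I : ℝ) ^ α * Nx ^ α :=
        Real.mul_rpow (by positivity) hNxpos.le
      have h3 : Nx ^ α = (a k) ^ α * (X α (k, j) ω) ^ α := by
        rw [hNx_def, hk, Real.mul_rpow (ha k).le (hx k).le]
      have h4 : (a k) ^ α ≤ b ^ α := Real.rpow_le_rpow (ha k).le (hab k) hα0.le
      have h5 : (X α (k, j) ω) ^ α ≤ M := hleM k
      have h6 : (Fintype.card I : ℝ) ^ α * (b ^ α * M) = C ^ α * M := by
        rw [hC_def, Real.mul_rpow (by positivity) hbpos.le]; ring
      calc V ^ α ≤ (Fintype.card I : ℝ) ^ α * Nx ^ α := h2 ▸ h1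
        _ = (Fintype.card I : ℝ) ^ α * ((a k) ^ α * (X α (k, j) ω) ^ α) := by
            rw [h3]
        _ ≤ (Fintype.card I : ℝ) ^ α * (b ^ α * M) := by
            apply mul_le_mul_of_nonneg_left _ (by positivity)
            exact mul_le_mul h4 h5 (Real.rpow_nonneg (hx k).le α)
              (Real.rpow_nonneg hbpos.le α)
        _ = C ^ α * M := h6
    have hVαlb : (C ^ α)⁻¹ * M ≤ V ^ α := by
      obtain ⟨k, _, hk⟩ := Finset.exists_mem_eq_sup' Finset.univ_nonempty
        (fun i : I => X α (i, j) ω ^ α)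
      have hxkb : X α (k, j) ω ≤ b * Nx := by
        have h1 : a k * X α (k, j) ω ≤ Nx := hleNx k
        have h2 : X α (k, j) ω = (a k)⁻¹ * (a k * X α (k, j) ω) := by
          rw [← mul_assoc, inv_mul_cancel₀ (ha k).ne', one_mul]
        rw [h2]
        exact mul_le_mul (hainvb k) h1 (mul_pos (ha k) (hx k)).le hbpos.le
      have hMb : M ≤ C ^ α * Nx ^ α := by
        have h2 : (X α (k, j) ω) ^ α ≤ (b * Nx) ^ α :=
          Real.rpow_le_rpow (hx k).le hxkb hα0.le
        have h3 : (b * Nx) ^ α = b ^ α * Nx ^ α :=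
          Real.mul_rpow hbpos.le hNxpos.le
        have h4 : b ^ α ≤ C ^ α :=
          Real.rpow_le_rpow hbpos.le (le_mul_of_one_le_left hbpos.le hcard1) hα0.le
        calc M = (X α (k, j) ω) ^ α := by rw [hM_def, hk]
          _ ≤ b ^ α * Nx ^ α := h3 ▸ h2
          _ ≤ C ^ α * Nx ^ α :=
              mul_le_mul_of_nonneg_right h4 (by positivity)
      have h5 : (C ^ α)⁻¹ * M ≤ Nx ^ α := by
        rw [inv_mul_le_iff₀ hCαpos]; linarith
      exact le_trans h5 (Real.rpow_le_rpow hNxpos.le hNV hα0.le)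
    have hVneg : V ^ (-α) = (V ^ α)⁻¹ := Real.rpow_neg hVpos.le α
    have hVαpos : 0 < V ^ α := Real.rpow_pos_of_pos hVpos α
    have hMinv_le : M⁻¹ ≤ y0⁻¹ := inv_anti₀ hy0 hMy0
    have hMinv_pos : 0 < M⁻¹ := inv_pos.2 hMpos
    have hup : V ^ (-α) ≤ C ^ α * M⁻¹ := by
      rw [hVneg]
      have h1 : (V ^ α)⁻¹ ≤ ((C ^ α)⁻¹ * M)⁻¹ :=
        inv_anti₀ (by positivity) hVαlb
      rwa [mul_inv, inv_inv] at h1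
    have hlow : (C ^ α * M)⁻¹ ≤ V ^ (-α) := by
      rw [hVneg]; exact inv_anti₀ hVαpos hVαub
    have h1t : 1 - (C ^ α)⁻¹ ≤ C ^ α - 1 := aux_one_sub_inv hCα1
    have hdiff1 : |V ^ (-α) - M⁻¹| ≤ δ/2 := by
      have hCαδ : C ^ α - 1 ≤ δ * y0 / 2 := by linarith
      have heq : (δ * y0 / 2) * y0⁻¹ = δ/2 := by field_simp
      have hbd : (C ^ α - 1) * y0⁻¹ ≤ δ/2 := by
        have h := mul_le_mul_of_nonneg_right hCαδ (le_of_lt (inv_pos.2 hy0))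
        linarith [heq ▸ h]
      have hu1 : V ^ (-α) - M⁻¹ ≤ (C ^ α - 1) * y0⁻¹ := by
        have hring : (C ^ α - 1) * M⁻¹ = C ^ α * M⁻¹ - M⁻¹ := by ring
        have h1 : V ^ (-α) - M⁻¹ ≤ (C ^ α - 1) * M⁻¹ := by
          rw [hring]; linarith [hup]
        calc V ^ (-α) - M⁻¹ ≤ (C ^ α - 1) * M⁻¹ := h1
          _ ≤ (C ^ α - 1) * y0⁻¹ :=
            mul_le_mul_of_nonneg_left hMinv_le (by linarith)
      have hu2 : M⁻¹ - V ^ (-α) ≤ (C ^ α - 1) * y0⁻¹ := by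
        have h2 : (C ^ α * M)⁻¹ = (C ^ α)⁻¹ * M⁻¹ := mul_inv _ _
        have h3 : M⁻¹ - V ^ (-α) ≤ (1 - (C ^ α)⁻¹) * M⁻¹ := by
          rw [h2] at hlow
          have hring : (1 - (C ^ α)⁻¹) * M⁻¹ = M⁻¹ - (C ^ α)⁻¹ * M⁻¹ := by ring
          rw [hring]; linarith [hlow]
        calc M⁻¹ - V ^ (-α) ≤ (1 - (C ^ α)⁻¹) * M⁻¹ := h3
          _ ≤ (C ^ α - 1) * M⁻¹ := mul_le_mul_of_nonneg_right h1t hMinv_pos.le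
          _ ≤ (C ^ α - 1) * y0⁻¹ :=
            mul_le_mul_of_nonneg_left hMinv_le (by linarith)
      exact abs_le.2 ⟨by linarith, by linarith⟩
    have hFub : F ≤ Real.exp ((1-ε) ^ (1/α) - (1-ε) / M) :=
      stable_cdf_upper hα0 (hX₀meas α ⟨hα0, hα1⟩) (hX₀stab α ⟨hα0, hα1⟩)
        hMpos (by linarith)
    have hFlb : Real.exp (-((1+ε) / M)) - Real.exp (-((1+ε) ^ (1/α))) ≤ F :=
      stable_cdf_lower hα0 (hX₀meas α ⟨hα0, hα1⟩) (hX₀stab α ⟨hα0, hα1⟩)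
        hMpos (by linarith)
    have hexp_cmp : Real.exp (-(2/y0)) ≤ Real.exp (-((1+ε) / M)) := by
      apply Real.exp_le_exp.2
      apply neg_le_neg
      exact div_le_div₀ (by norm_num) (by linarith) hy0 hMy0
    have hexpδ4 : Real.exp (-(δ/4)) < 1 := Real.exp_lt_one_iff.2 (by linarith)
    have hr : Real.exp (-((1+ε) ^ (1/α)))
        ≤ Real.exp (-((1+ε) / M)) * (1 - Real.exp (-(δ/4))) :=
      le_trans hc2.le (mul_le_mul_of_nonneg_right hexp_cmp (by linarith))
    have hFlb2 : Real.exp (-((1+ε) / M) - δ/4) ≤ F := by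
      have heq : Real.exp (-((1+ε) / M) - δ/4)
          = Real.exp (-((1+ε) / M)) * Real.exp (-(δ/4)) := by
        rw [← Real.exp_add]; ring_nf
      rw [heq]
      have hring : Real.exp (-((1+ε) / M)) * (1 - Real.exp (-(δ/4)))
          = Real.exp (-((1+ε) / M))
            - Real.exp (-((1+ε) / M)) * Real.exp (-(δ/4)) := by ring
      rw [hring] at hr
      linarith [hr, hFlb]
    have hFpos : 0 < F := lt_of_lt_of_le (Real.exp_pos _) hFlb2
    have hlogub : Real.log F ≤ (1-ε) ^ (1/α) - (1-ε) / M :=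
      (Real.log_le_iff_le_exp hFpos).2 hFub
    have hloglb : -((1+ε) / M) - δ/4 ≤ Real.log F :=
      (Real.le_log_iff_exp_le hFpos).2 hFlb2
    have hεM : ε * M⁻¹ ≤ δ/8 := by
      have h1 : ε * M⁻¹ ≤ (δ * y0 / 8) * y0⁻¹ :=
        mul_le_mul hεy0 hMinv_le hMinv_pos.le (by positivity)
      have h2 : (δ * y0 / 8) * y0⁻¹ = δ/8 := by field_simp
      linarith [h2 ▸ h1]
    have hdiv1 : (1-ε) / M = M⁻¹ - ε * M⁻¹ := by
      rw [div_eq_mul_inv]; ring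
    have hdiv2 : (1+ε) / M = M⁻¹ + ε * M⁻¹ := by
      rw [div_eq_mul_inv]; ring
    have hεMnn : 0 ≤ ε * M⁻¹ := by positivity
    have hdiff2 : |Real.log F + M⁻¹| ≤ 3*δ/8 := by
      rw [hdiv1] at hlogub
      rw [hdiv2] at hloglb
      exact abs_le.2 ⟨by linarith, by linarith⟩
    have hsum : |V ^ (-α) + Real.log F|
        ≤ |V ^ (-α) - M⁻¹| + |Real.log F + M⁻¹| := by
      have heq : V ^ (-α) + Real.log F
          = (V ^ (-α) - M⁻¹) + (Real.log F + M⁻¹) := by ring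
      rw [heq]; exact abs_add_le _ _
    have : |V ^ (-α) + Real.log F| < δ := by
      calc |V ^ (-α) + Real.log F|
          ≤ |V ^ (-α) - M⁻¹| + |Real.log F + M⁻¹| := hsum
        _ ≤ δ/2 + 3*δ/8 := add_le_add hdiff1 hdiff2
        _ < δ := by linarith
    linarith
  calc P {ω | δ ≤
        |(∑ i : I, a i * X α (i, j) ω) ^ (-α) +
          Real.log ((P {ω' | X₀ α ω' ^ α ≤
            Finset.univ.sup' Finset.univ_nonempty
              (fun i : I => X α (i, j) ω ^ α)}).toReal)|}
      ≤ P (B ∪ N) := measure_mono hsub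
    _ ≤ P B + P N := measure_union_le _ _
    _ = P B := by rw [hPN, add_zero]
    _ ≤ ENNReal.ofReal η' := by
        have hPB : (P B).toReal ≤ η' := by
          have h := stable_cdf_upper hα0 (hXmeas α ⟨hα0, hα1⟩ (i0, j))
            (hXstab α ⟨hα0, hα1⟩ (i0, j)) hy0 (u := 1/2) (by norm_num)
          have h2 : ((1:ℝ)/2) ^ (1/α) ≤ 1 :=
            Real.rpow_le_one (by norm_num) (by norm_num) (one_div_pos.2 hα0).le
          have h3 : ((1:ℝ)/2) ^ (1/α) - (1/2)/y0 ≤ Real.log η' := by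
            rw [hy0inv]; linarith
          calc (P B).toReal ≤ Real.exp (((1:ℝ)/2) ^ (1/α) - (1/2)/y0) := h
            _ ≤ Real.exp (Real.log η') := Real.exp_le_exp.2 h3
            _ = η' := Real.exp_log hη'pos
        calc P B = ENNReal.ofReal (P B).toReal :=
              (ENNReal.ofReal_toReal (measure_ne_top P B)).symm
          _ ≤ ENNReal.ofReal η' := ENNReal.ofReal_le_ofReal hPB
    _ ≤ η := hofReal

/-- Equivalence of the projection and maximal-term pivots: with `I` a finite nonempty index
set of cardinality `c`, weights `a i > 0`, i.i.d. positive strictly `α`-stable variables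
`X α (i, j)`, projections `V j = ∑ i, a i * X α (i, j)`, maxima `M j = max_i (X α (i, j))^α`,
and `F_α` the CDF of `(X α)^α` (computed from a generic copy `X₀ α`), the quantity
`c * ∑ j, (V j)^(-α) + c * ∑ j, log (F_α (M j))` converges to `0` in probability as `α → 0⁺`,
and in particular `(V j)^(-α) + log (F_α (M j))` converges to `0` in probability for each `j`. -/
theorem projection_maxterm_pivots_equivalent {Ω : Type*} [MeasurableSpace Ω]
    (P : Measure Ω) [IsProbabilityMeasure P]
    {I : Type*} [Fintype I] [Nonempty I]
    (a : I → ℝ) (ha : ∀ i, 0 < a i)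
    (m : ℕ) (hm : 0 < m)
    (X : ℝ → I × Fin m → Ω → ℝ) (X₀ : ℝ → Ω → ℝ)
    (hXmeas : ∀ α ∈ Set.Ioo (0 : ℝ) 1, ∀ p, Measurable (X α p))
    (hX₀meas : ∀ α ∈ Set.Ioo (0 : ℝ) 1, Measurable (X₀ α))
    (hXindep : ∀ α ∈ Set.Ioo (0 : ℝ) 1, iIndepFun (X α) P)
    (hXstab : ∀ α ∈ Set.Ioo (0 : ℝ) 1, ∀ p, IsPositiveStable P α (X α p))
    (hX₀stab : ∀ α ∈ Set.Ioo (0 : ℝ) 1, IsPositiveStable P α (X₀ α)) :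
    (∀ δ : ℝ, 0 < δ →
      Tendsto
        (fun α : ℝ => P {ω | δ ≤
          |(Fintype.card I : ℝ) * ∑ j : Fin m, (∑ i : I, a i * X α (i, j) ω) ^ (-α) +
            (Fintype.card I : ℝ) * ∑ j : Fin m, Real.log
              ((P {ω' | X₀ α ω' ^ α ≤
                Finset.univ.sup' Finset.univ_nonempty
                  (fun i : I => X α (i, j) ω ^ α)}).toReal)|})
        (nhdsWithin 0 (Set.Ioi 0)) (nhds 0)) ∧
    (∀ j : Fin m, ∀ δ : ℝ, 0 < δ →
      Tendsto
        (fun α : ℝ => P {ω | δ ≤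
          |(∑ i : I, a i * X α (i, j) ω) ^ (-α) +
            Real.log ((P {ω' | X₀ α ω' ^ α ≤
              Finset.univ.sup' Finset.univ_nonempty
                (fun i : I => X α (i, j) ω ^ α)}).toReal)|})
        (nhdsWithin 0 (Set.Ioi 0)) (nhds 0)) := by
  have hperj : ∀ j : Fin m, ∀ δ : ℝ, 0 < δ →
      Tendsto
        (fun α : ℝ => P {ω | δ ≤
          |(∑ i : I, a i * X α (i, j) ω) ^ (-α) +
            Real.log ((P {ω' | X₀ α ω' ^ α ≤
              Finset.univ.sup' Finset.univ_nonempty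
                (fun i : I => X α (i, j) ω ^ α)}).toReal)|})
        (nhdsWithin 0 (Set.Ioi 0)) (nhds 0) :=
    fun j δ hδ => perj P a ha m hm X X₀ hXmeas hX₀meas hXstab hX₀stab j δ hδ
  refine ⟨?_, hperj⟩
  intro δ hδ
  haveI : Nonempty (Fin m) := ⟨⟨0, hm⟩⟩
  have hc : (0:ℝ) < (Fintype.card I : ℝ) := by exact_mod_cast Fintype.card_pos
  have hmR : (0:ℝ) < (m : ℝ) := by exact_mod_cast hm
  have hδ' : 0 < δ / ((Fintype.card I : ℝ) * m) := by positivity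
  have hsub : ∀ α : ℝ, {ω | δ ≤
      |(Fintype.card I : ℝ) * ∑ j : Fin m, (∑ i : I, a i * X α (i, j) ω) ^ (-α) +
        (Fintype.card I : ℝ) * ∑ j : Fin m, Real.log
          ((P {ω' | X₀ α ω' ^ α ≤
            Finset.univ.sup' Finset.univ_nonempty
              (fun i : I => X α (i, j) ω ^ α)}).toReal)|} ⊆
      ⋃ j : Fin m, {ω | δ / ((Fintype.card I : ℝ) * m) ≤
        |(∑ i : I, a i * X α (i, j) ω) ^ (-α) +
          Real.log ((P {ω' | X₀ α ω' ^ α ≤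
            Finset.univ.sup' Finset.univ_nonempty
              (fun i : I => X α (i, j) ω ^ α)}).toReal)|} := by
    intro α ω hω
    simp only [Set.mem_setOf_eq] at hω
    by_contra hcon
    simp only [Set.mem_iUnion, Set.mem_setOf_eq, not_exists, not_le] at hcon
    set t : Fin m → ℝ := fun j =>
      (∑ i : I, a i * X α (i, j) ω) ^ (-α) +
        Real.log ((P {ω' | X₀ α ω' ^ α ≤
          Finset.univ.sup' Finset.univ_nonempty
            (fun i : I => X α (i, j) ω ^ α)}).toReal) with ht_def
    have hlt : |(Fintype.card I : ℝ) * ∑ j : Fin m, (∑ i : I, a i * X α (i, j) ω) ^ (-α) +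
        (Fintype.card I : ℝ) * ∑ j : Fin m, Real.log
          ((P {ω' | X₀ α ω' ^ α ≤
            Finset.univ.sup' Finset.univ_nonempty
              (fun i : I => X α (i, j) ω ^ α)}).toReal)| < δ := by
      have heq : (Fintype.card I : ℝ) * ∑ j : Fin m, (∑ i : I, a i * X α (i, j) ω) ^ (-α) +
          (Fintype.card I : ℝ) * ∑ j : Fin m, Real.log
            ((P {ω' | X₀ α ω' ^ α ≤
              Finset.univ.sup' Finset.univ_nonempty
                (fun i : I => X α (i, j) ω ^ α)}).toReal)
          = (Fintype.card I : ℝ) * ∑ j : Fin m, t j := by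
        rw [← mul_add, ← Finset.sum_add_distrib]
      rw [heq, abs_mul, abs_of_nonneg hc.le]
      have h1 : |∑ j : Fin m, t j| ≤ ∑ j : Fin m, |t j| :=
        Finset.abs_sum_le_sum_abs _ _
      have h2 : ∑ j : Fin m, |t j|
          < ∑ _j : Fin m, δ / ((Fintype.card I : ℝ) * m) :=
        Finset.sum_lt_sum_of_nonempty Finset.univ_nonempty fun j _ => hcon j
      have h3 : ∑ _j : Fin m, δ / ((Fintype.card I : ℝ) * m)
          = (m : ℝ) * (δ / ((Fintype.card I : ℝ) * m)) := by
        rw [Finset.sum_const, Finset.card_univ, Fintype.card_fin, nsmul_eq_mul]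
      have h4 : (Fintype.card I : ℝ) * ((m : ℝ) * (δ / ((Fintype.card I : ℝ) * m))) = δ := by
        field_simp
      calc (Fintype.card I : ℝ) * |∑ j : Fin m, t j|
          ≤ (Fintype.card I : ℝ) * ∑ j : Fin m, |t j| :=
            mul_le_mul_of_nonneg_left h1 hc.le
        _ < (Fintype.card I : ℝ) * ((m : ℝ) * (δ / ((Fintype.card I : ℝ) * m))) := by
            apply mul_lt_mul_of_pos_left _ hc
            rw [← h3]; exact h2
        _ = δ := h4
    linarith
  have hbound : ∀ α : ℝ, P {ω | δ ≤
      |(Fintype.card I : ℝ) * ∑ j : Fin m, (∑ i : I, a i * X α (i, j) ω) ^ (-α) +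
        (Fintype.card I : ℝ) * ∑ j : Fin m, Real.log
          ((P {ω' | X₀ α ω' ^ α ≤
            Finset.univ.sup' Finset.univ_nonempty
              (fun i : I => X α (i, j) ω ^ α)}).toReal)|}
      ≤ ∑ j : Fin m, P {ω | δ / ((Fintype.card I : ℝ) * m) ≤
        |(∑ i : I, a i * X α (i, j) ω) ^ (-α) +
          Real.log ((P {ω' | X₀ α ω' ^ α ≤
            Finset.univ.sup' Finset.univ_nonempty
              (fun i : I => X α (i, j) ω ^ α)}).toReal)|} := by
    intro α
    calc P _ ≤ P (⋃ j : Fin m, {ω | δ / ((Fintype.card I : ℝ) * m) ≤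
          |(∑ i : I, a i * X α (i, j) ω) ^ (-α) +
            Real.log ((P {ω' | X₀ α ω' ^ α ≤
              Finset.univ.sup' Finset.univ_nonempty
                (fun i : I => X α (i, j) ω ^ α)}).toReal)|}) :=
          measure_mono (hsub α)
      _ ≤ ∑' j : Fin m, P {ω | δ / ((Fintype.card I : ℝ) * m) ≤
          |(∑ i : I, a i * X α (i, j) ω) ^ (-α) +
            Real.log ((P {ω' | X₀ α ω' ^ α ≤
              Finset.univ.sup' Finset.univ_nonempty
                (fun i : I => X α (i, j) ω ^ α)}).toReal)|} := measure_iUnion_le _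
      _ = ∑ j : Fin m, P {ω | δ / ((Fintype.card I : ℝ) * m) ≤
          |(∑ i : I, a i * X α (i, j) ω) ^ (-α) +
            Real.log ((P {ω' | X₀ α ω' ^ α ≤
              Finset.univ.sup' Finset.univ_nonempty
                (fun i : I => X α (i, j) ω ^ α)}).toReal)|} := tsum_fintype _
  have hsum : Tendsto (fun α : ℝ => ∑ j : Fin m, P {ω | δ / ((Fintype.card I : ℝ) * m) ≤
      |(∑ i : I, a i * X α (i, j) ω) ^ (-α) +
        Real.log ((P {ω' | X₀ α ω' ^ α ≤
          Finset.univ.sup' Finset.univ_nonempty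
            (fun i : I => X α (i, j) ω ^ α)}).toReal)|})
      (nhdsWithin 0 (Set.Ioi 0)) (nhds 0) := by
    have h := tendsto_finset_sum (Finset.univ : Finset (Fin m))
      (fun j _ => hperj j (δ / ((Fintype.card I : ℝ) * m)) hδ')
    simpa using h
  exact tendsto_of_tendsto_of_tendsto_of_le_of_le tendsto_const_nhds hsum
    (fun α => zero_le) hbound
end
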